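/- arXiv:2302.09538 — 8 statements merged into one kernel-verified Lean document; each statement's English description precedes it below -/
import Mathlib

section
/- Let Φ be a Young function with right-continuous inverse Φ^{-1}, let 0 ≤ λ ≤ 1 and t > 0. Then the central Morrey–Orlicz norm of the characteristic function of the ball B_t satisfies ‖χ_{B_t}‖_{M^{Φ,λ}(0)} = 1 / Φ^{-1}(|B_t|^{λ−1}). -/
open MeasureTheory ENNReal

noncomputable section

/-- A Young function: `Φ : [0,∞) → [0,∞]` nondecreasing, convex, `Φ(0)=0`,
`lim_{u→0+} Φ(u) = 0`, not identically `0` or `∞` on `(0,∞)`, and left continuous. -/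
structure IsYoungFunction (Φ : ℝ → ℝ≥0∞) : Prop where
  zero : Φ 0 = 0
  mono : MonotoneOn Φ (Set.Ici 0)
  convex : ∀ u ∈ Set.Ici (0:ℝ), ∀ v ∈ Set.Ici (0:ℝ), ∀ t : ℝ, 0 ≤ t → t ≤ 1 →
    Φ (t * u + (1 - t) * v) ≤ ENNReal.ofReal t * Φ u + ENNReal.ofReal (1 - t) * Φ v
  tendsto_zero : Filter.Tendsto Φ (nhdsWithin 0 (Set.Ioi 0)) (nhds 0)
  left_continuous : ∀ u : ℝ, 0 < u → Filter.Tendsto Φ (nhdsWithin u (Set.Iio u)) (nhds (Φ u))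
  not_trivially_zero : ∃ u : ℝ, 0 < u ∧ Φ u ≠ 0
  not_trivially_top : ∃ u : ℝ, 0 < u ∧ Φ u ≠ ⊤

/-- The complementary Young function `Φ*(v) = sup_{u>0} (uv - Φ(u))`. -/
def complementaryYoung (Φ : ℝ → ℝ≥0∞) (v : ℝ) : ℝ≥0∞ :=
  ⨆ u : {u : ℝ // 0 < u}, (ENNReal.ofReal (u.1 * v) - Φ u.1)

/-- The right-continuous inverse `Φ⁻¹(v) = inf {u ≥ 0 : Φ(u) > v}` (with `inf ∅ = ∞`). -/
def rcInv (Φ : ℝ → ℝ≥0∞) (v : ℝ≥0∞) : ℝ≥0∞ :=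
  sInf {w : ℝ≥0∞ | ∃ u : ℝ, 0 ≤ u ∧ w = ENNReal.ofReal u ∧ v < Φ u}

/-- The Luxemburg-type functional
`‖f‖_{Φ,λ,B_r} = inf {ε > 0 : (1/|B_r|^λ) ∫_{B_r} Φ(|f(x)|/ε) dx ≤ 1}`. -/
def luxNorm (n : ℕ) (Φ : ℝ → ℝ≥0∞) (lam r : ℝ)
    (f : EuclideanSpace ℝ (Fin n) → ℝ) : ℝ≥0∞ :=
  sInf {ε : ℝ≥0∞ | ∃ e : ℝ, 0 < e ∧ ε = ENNReal.ofReal e ∧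
    (∫⁻ x in Metric.ball (0 : EuclideanSpace ℝ (Fin n)) r, Φ (|f x| / e))
      ≤ ENNReal.ofReal
          ((volume (Metric.ball (0 : EuclideanSpace ℝ (Fin n)) r)).toReal ^ lam)}

/-- The central Morrey–Orlicz norm `‖f‖_{M^{Φ,λ}(0)} = sup_{r>0} ‖f‖_{Φ,λ,B_r}`. -/
def centralNorm (n : ℕ) (Φ : ℝ → ℝ≥0∞) (lam : ℝ)
    (f : EuclideanSpace ℝ (Fin n) → ℝ) : ℝ≥0∞ :=
  ⨆ r : {r : ℝ // 0 < r}, luxNorm n Φ lam r.1 f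

/-- Key inversion lemma: the Luxemburg-type infimum equals the reciprocal of the
right-continuous inverse. -/
theorem key_inv (Φ : ℝ → ℝ≥0∞) (hmono : MonotoneOn Φ (Set.Ici 0)) (h0 : Φ 0 = 0)
    (v : ℝ≥0∞) :
    sInf {ε : ℝ≥0∞ | ∃ e : ℝ, 0 < e ∧ ε = ENNReal.ofReal e ∧ Φ (1/e) ≤ v}
      = 1 / sInf {w : ℝ≥0∞ | ∃ u : ℝ, 0 ≤ u ∧ w = ENNReal.ofReal u ∧ v < Φ u} := by
  set A := sInf {ε : ℝ≥0∞ | ∃ e : ℝ, 0 < e ∧ ε = ENNReal.ofReal e ∧ Φ (1/e) ≤ v} with hA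
  set B := sInf {w : ℝ≥0∞ | ∃ u : ℝ, 0 ≤ u ∧ w = ENNReal.ofReal u ∧ v < Φ u} with hB
  rw [one_div]
  apply le_antisymm
  · apply le_of_forall_gt_imp_ge_of_dense
    intro c hc
    rcases eq_or_ne c ⊤ with rfl | hctop
    · exact le_top
    have hc0 : 0 < c := lt_of_le_of_lt zero_le hc
    set e : ℝ := c.toReal with he
    have he0 : 0 < e := ENNReal.toReal_pos hc0.ne' hctop
    have hce : c = ENNReal.ofReal e := (ENNReal.ofReal_toReal hctop).symm
    have hlt : ENNReal.ofReal (1/e) < B := by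
      rw [← ENNReal.ofReal_toReal hctop] at hc
      rw [one_div, ENNReal.ofReal_inv_of_pos he0]
      rwa [← ENNReal.inv_lt_inv, inv_inv] at hc
    have hP : Φ (1/e) ≤ v := by
      by_contra hnP
      push_neg at hnP
      have : B ≤ ENNReal.ofReal (1/e) :=
        sInf_le ⟨1/e, by positivity, rfl, hnP⟩
      exact absurd hlt (not_lt.mpr this)
    calc A ≤ ENNReal.ofReal e := sInf_le ⟨e, he0, rfl, hP⟩
    _ = c := hce.symm
  · rw [← inv_inv A, ENNReal.inv_le_inv]
    apply le_sInf
    rintro w ⟨u, hu0, rfl, hvu⟩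
    have hupos : 0 < u := by
      rcases hu0.lt_or_eq with h | h
      · exact h
      · exfalso; rw [← h, h0] at hvu; exact absurd hvu (not_lt.mpr (zero_le (a := v)))
    rw [← ENNReal.inv_le_inv, inv_inv, ← ENNReal.ofReal_inv_of_pos hupos]
    apply le_sInf
    rintro ε ⟨e, he0, rfl, hPe⟩
    have hlt : 1/e < u := by
      by_contra hle
      push_neg at hle
      have : Φ u ≤ Φ (1/e) :=
        hmono (Set.mem_Ici.mpr hupos.le) (Set.mem_Ici.mpr (by positivity)) hle
      exact absurd hvu (not_lt.mpr (this.trans hPe))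
    have h2 : u⁻¹ < e := by
      rw [one_div] at hlt
      exact inv_lt_of_inv_lt₀ he0 hlt
    exact ENNReal.ofReal_le_ofReal h2.le

/-- for a Young function Φ, 0 ≤ λ ≤ 1 and t > 0,
‖χ_{B_t}‖_{M^{Φ,λ}(0)} = 1 / Φ⁻¹(|B_t|^{λ-1}). -/
theorem statement4 (n : ℕ) (hn : 0 < n) (Φ : ℝ → ℝ≥0∞) (hΦ : IsYoungFunction Φ)
    (lam : ℝ) (hlam0 : 0 ≤ lam) (hlam1 : lam ≤ 1) (t : ℝ) (ht : 0 < t) :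
    centralNorm n Φ lam
        (Set.indicator (Metric.ball (0 : EuclideanSpace ℝ (Fin n)) t) fun _ => (1 : ℝ))
      = 1 / rcInv Φ (ENNReal.ofReal
            ((volume (Metric.ball (0 : EuclideanSpace ℝ (Fin n)) t)).toReal ^ (lam - 1))) := by
  set E := EuclideanSpace ℝ (Fin n) with hE
  set f : E → ℝ := Set.indicator (Metric.ball (0 : E) t) fun _ => (1 : ℝ) with hf
  set V : ℝ → ℝ := fun s => (volume (Metric.ball (0 : E) s)).toReal with hV
  have hVtop : ∀ s : ℝ, volume (Metric.ball (0 : E) s) ≠ ⊤ := fun s =>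
    measure_ball_lt_top.ne
  have hVof : ∀ s : ℝ, volume (Metric.ball (0 : E) s) = ENNReal.ofReal (V s) := fun s =>
    (ENNReal.ofReal_toReal (hVtop s)).symm
  have hVpos : ∀ s : ℝ, 0 < s → 0 < V s := fun s hs =>
    ENNReal.toReal_pos (Metric.measure_ball_pos volume 0 hs).ne' (hVtop s)
  have hVmono : ∀ s s' : ℝ, s ≤ s' → V s ≤ V s' := fun s s' hss =>
    ENNReal.toReal_le_toReal (hVtop s) (hVtop s')
      |>.mpr (measure_mono (Metric.ball_subset_ball hss))
  -- the integral computation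
  have hint : ∀ (r e : ℝ), 0 < e →
      (∫⁻ x in Metric.ball (0 : E) r, Φ (|f x| / e))
        = Φ (1/e) * volume (Metric.ball (0 : E) (min r t)) := by
    intro r e he
    have hfun : (fun x => Φ (|f x| / e))
        = (Metric.ball (0 : E) t).indicator (fun _ => Φ (1/e)) := by
      funext x
      by_cases hx : x ∈ Metric.ball (0 : E) t
      · simp [hf, Set.indicator_of_mem hx]
      · simp [hf, Set.indicator_of_notMem hx, hΦ.zero]
    rw [hfun, lintegral_indicator measurableSet_ball,
      Measure.restrict_restrict measurableSet_ball, lintegral_const,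
      Measure.restrict_apply_univ]
    have hss : Metric.ball (0 : E) t ∩ Metric.ball (0 : E) r
        = Metric.ball (0 : E) (min r t) := by
      ext x
      simp only [Set.mem_inter_iff, Metric.mem_ball, lt_min_iff]
      tauto
    rw [hss]
  -- rewrite the Luxemburg norm
  have hlux : ∀ r : ℝ, luxNorm n Φ lam r f
      = sInf {ε : ℝ≥0∞ | ∃ e : ℝ, 0 < e ∧ ε = ENNReal.ofReal e ∧
          Φ (1/e) * ENNReal.ofReal (V (min r t)) ≤ ENNReal.ofReal (V r ^ lam)} := by
    intro r
    unfold luxNorm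
    congr 1
    ext ε
    refine exists_congr fun e => and_congr_right fun he => and_congr_right fun _ => ?_
    rw [hint r e he, hVof (min r t)]
  -- key real inequality
  have hreal : ∀ r : ℝ, 0 < r → V t ^ (lam - 1) * V (min r t) ≤ V r ^ lam := by
    intro r hr
    rcases le_total r t with hrt | htr
    · rw [min_eq_left hrt]
      calc V t ^ (lam - 1) * V r ≤ V r ^ (lam - 1) * V r :=
            mul_le_mul_of_nonneg_right
              (Real.rpow_le_rpow_of_nonpos (hVpos r hr) (hVmono r t hrt)
                (by linarith)) (hVpos r hr).le
      _ = V r ^ lam := by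
            rw [← Real.rpow_add_one (hVpos r hr).ne' (lam - 1), sub_add_cancel]
    · rw [min_eq_right htr]
      calc V t ^ (lam - 1) * V t = V t ^ lam := by
            rw [← Real.rpow_add_one (hVpos t ht).ne' (lam - 1), sub_add_cancel]
      _ ≤ V r ^ lam := Real.rpow_le_rpow (hVpos t ht).le (hVmono t r htr) hlam0
  set v : ℝ≥0∞ := ENNReal.ofReal (V t ^ (lam - 1)) with hv
  -- the condition at radius t is exactly `Φ(1/e) ≤ v`
  have hofvt : ENNReal.ofReal (V t ^ lam) = v * ENNReal.ofReal (V t) := by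
    rw [hv, ← ENNReal.ofReal_mul (Real.rpow_nonneg (hVpos t ht).le _),
      ← Real.rpow_add_one (hVpos t ht).ne' (lam - 1), sub_add_cancel]
  have hcondt : ∀ e : ℝ,
      (Φ (1/e) * ENNReal.ofReal (V (min t t)) ≤ ENNReal.ofReal (V t ^ lam))
        ↔ Φ (1/e) ≤ v := by
    intro e
    rw [min_self, hofvt]
    exact ENNReal.mul_le_mul_iff_left (by simpa using (hVpos t ht))
      ENNReal.ofReal_ne_top
  -- monotonicity: lux set at t is contained in lux set at r
  have hsub : ∀ r : ℝ, 0 < r →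
      {ε : ℝ≥0∞ | ∃ e : ℝ, 0 < e ∧ ε = ENNReal.ofReal e ∧
          Φ (1/e) * ENNReal.ofReal (V (min t t)) ≤ ENNReal.ofReal (V t ^ lam)}
        ⊆ {ε : ℝ≥0∞ | ∃ e : ℝ, 0 < e ∧ ε = ENNReal.ofReal e ∧
          Φ (1/e) * ENNReal.ofReal (V (min r t)) ≤ ENNReal.ofReal (V r ^ lam)} := by
    rintro r hr ε ⟨e, he, rfl, hcond⟩
    refine ⟨e, he, rfl, ?_⟩
    have hPhi : Φ (1/e) ≤ v := (hcondt e).mp hcond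
    calc Φ (1/e) * ENNReal.ofReal (V (min r t))
        ≤ v * ENNReal.ofReal (V (min r t)) := mul_le_mul_left hPhi _
      _ = ENNReal.ofReal (V t ^ (lam - 1) * V (min r t)) :=
          (ENNReal.ofReal_mul (Real.rpow_nonneg (hVpos t ht).le _)).symm
      _ ≤ ENNReal.ofReal (V r ^ lam) := ENNReal.ofReal_le_ofReal (hreal r hr)
  -- centralNorm equals luxNorm at t
  have hcentral : centralNorm n Φ lam f = luxNorm n Φ lam t f := by
    apply le_antisymm
    · apply iSup_le
      rintro ⟨r, hr⟩
      rw [hlux r, hlux t]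
      exact sInf_le_sInf (hsub r hr)
    · exact le_iSup (fun r : {r : ℝ // 0 < r} => luxNorm n Φ lam r.1 f) ⟨t, ht⟩
  rw [hcentral, hlux t]
  have hset : {ε : ℝ≥0∞ | ∃ e : ℝ, 0 < e ∧ ε = ENNReal.ofReal e ∧
      Φ (1/e) * ENNReal.ofReal (V (min t t)) ≤ ENNReal.ofReal (V t ^ lam)}
      = {ε : ℝ≥0∞ | ∃ e : ℝ, 0 < e ∧ ε = ENNReal.ofReal e ∧ Φ (1/e) ≤ v} := by
    ext ε
    exact exists_congr fun e => and_congr_right fun he => and_congr_right fun _ => hcondt e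
  rw [hset, key_inv Φ hΦ.mono hΦ.zero v]
  rfl
end
end

section
/- Let Φ be an Orlicz function with inverse Φ^{-1}, 0 < λ < 1, R ≥ 1, x_R = (R, 0, …, 0) ∈ ℝ^n, and f_R = χ_{B(x_R,1)}. Then ‖f_R‖_{M^{Φ,λ}(0)} ≤ 1 / Φ^{-1}( (v_n^λ / (2^n v_{n−1})) R^{λ n} ), where v_k denotes the volume of the unit ball in ℝ^k. -/
open MeasureTheory ENNReal

noncomputable section

/-- An Orlicz function: `Φ : [0,∞) → [0,∞)` strictly increasing, continuous,
convex, with `Φ(0) = 0`. -/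
structure IsOrliczFunction (Φ : ℝ → ℝ) : Prop where
  zero : Φ 0 = 0
  strictMono : StrictMonoOn Φ (Set.Ici 0)
  continuous : ContinuousOn Φ (Set.Ici 0)
  convex : ConvexOn ℝ (Set.Ici 0) Φ

/-- `Φinv` is the inverse of the Orlicz function `Φ` on `[0,∞)`. -/
def IsOrliczInverse (Φ Φinv : ℝ → ℝ) : Prop :=
  (∀ u : ℝ, 0 ≤ u → Φinv (Φ u) = u) ∧ (∀ v : ℝ, 0 ≤ v → 0 ≤ Φinv v ∧ Φ (Φinv v) = v)

/-- Membership in the central Morrey–Orlicz space `M^{Φ,λ}(0)` for a real Orlicz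
function `Φ`: `f ∈ L¹_loc(ℝⁿ)` and `‖f‖_{M^{Φ,λ}(0)} < ∞`. -/
def MemCentralMorreyOrlicz (n : ℕ) (Φ : ℝ → ℝ) (lam : ℝ)
    (f : EuclideanSpace ℝ (Fin n) → ℝ) : Prop :=
  LocallyIntegrable f volume ∧
    centralNorm n (fun u => ENNReal.ofReal (Φ u)) lam f < ⊤

/-- The Riesz potential `I_α f(x) = ∫_{ℝⁿ} f(y) |x-y|^{α-n} dy`. -/
def rieszPotential (n : ℕ) (α : ℝ) (f : EuclideanSpace ℝ (Fin n) → ℝ)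
    (x : EuclideanSpace ℝ (Fin n)) : ℝ :=
  ∫ y, f y * ‖x - y‖ ^ (α - (n : ℝ))

/-- The volume of the unit ball in ℝᵏ: v_k = π^{k/2} / Γ(k/2 + 1). -/
def unitBallVol (k : ℕ) : ℝ := Real.pi ^ ((k : ℝ) / 2) / Real.Gamma ((k : ℝ) / 2 + 1)

lemma unitBallVol_pos (k : ℕ) : 0 < unitBallVol k :=
  div_pos (Real.rpow_pos_of_pos Real.pi_pos _) (Real.Gamma_pos_of_pos (by positivity))

lemma volume_ball_eucl (m : ℕ) (x : EuclideanSpace ℝ (Fin m)) {r : ℝ} (hr : 0 < r) :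
    volume (Metric.ball x r) = ENNReal.ofReal (unitBallVol m * r ^ m) := by
  rcases Nat.eq_zero_or_pos m with hm | hm
  · subst hm
    have h1 : Metric.ball x r = Set.univ := by
      ext y; simp [Metric.mem_ball, Subsingleton.elim y x, hr]
    have h2 : (volume : Measure (EuclideanSpace ℝ (Fin 0))) Set.univ = 1 := by
      have h3 := ((EuclideanSpace.volume_preserving_symm_measurableEquiv_toLp (Fin 0)).symm).measure_preimage
        (MeasurableSet.univ.nullMeasurableSet (μ := (volume : Measure (EuclideanSpace ℝ (Fin 0)))))
      rw [Set.preimage_univ] at h3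
      rw [← h3, volume_pi, Measure.pi_univ]
      simp
    rw [h1, h2]
    simp [unitBallVol, Real.Gamma_one]
  · have : Nonempty (Fin m) := ⟨⟨0, hm⟩⟩
    rw [EuclideanSpace.volume_ball (Fin m) x r, Fintype.card_fin,
      ← ENNReal.ofReal_pow hr.le, ← ENNReal.ofReal_mul (by positivity), mul_comm]
    congr 2
    unfold unitBallVol
    congr 1
    rw [Real.sqrt_eq_rpow, ← Real.rpow_natCast (Real.pi ^ ((1:ℝ)/2)) m,
      ← Real.rpow_mul Real.pi_pos.le]
    congr 1
    ring

lemma volume_slab_le (m : ℕ) (a b : ℝ) {ρ : ℝ} (hρ : 0 < ρ) :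
    volume {x : EuclideanSpace ℝ (Fin (m+1)) |
        x 0 ∈ Set.Ioo a b ∧ ∑ i : Fin m, x i.succ ^ 2 < ρ ^ 2}
      ≤ ENNReal.ofReal (b - a) * ENNReal.ofReal (unitBallVol m * ρ ^ m) := by
  set C : Set (Fin m → ℝ) := {y | ∑ i, y i ^ 2 < ρ ^ 2} with hC
  have hCmeas : MeasurableSet C := by
    apply measurableSet_lt _ measurable_const
    exact Finset.measurable_sum _ fun i _ => (measurable_pi_apply i).pow_const 2
  have hCvol : (volume : Measure (Fin m → ℝ)) C = ENNReal.ofReal (unitBallVol m * ρ ^ m) := by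
    have hpre : C = (MeasurableEquiv.toLp 2 (Fin m → ℝ)).symm.symm ⁻¹'
        (Metric.ball (0 : EuclideanSpace ℝ (Fin m)) ρ) := by
      ext y
      simp only [Set.mem_preimage, Metric.mem_ball, dist_zero_right, hC, Set.mem_setOf_eq,
        EuclideanSpace.norm_eq]
      rw [Real.sqrt_lt' hρ]
      simp [Real.norm_eq_abs, sq_abs, MeasurableEquiv.toLp_apply]
    rw [hpre, ((EuclideanSpace.volume_preserving_symm_measurableEquiv_toLp (Fin m)).symm).measure_preimage
      measurableSet_ball.nullMeasurableSet, volume_ball_eucl m 0 hρ]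
  set eq1 := (MeasurableEquiv.toLp 2 (Fin (m+1) → ℝ)).symm
  set eq2 := MeasurableEquiv.piFinSuccAbove (fun _ : Fin (m+1) => ℝ) 0
  have hmp : MeasurePreserving (⇑eq2 ∘ ⇑eq1) volume volume :=
    (volume_preserving_piFinSuccAbove (fun _ : Fin (m+1) => ℝ) 0).comp
      (EuclideanSpace.volume_preserving_symm_measurableEquiv_toLp (Fin (m+1)))
  have hset : {x : EuclideanSpace ℝ (Fin (m+1)) |
        x 0 ∈ Set.Ioo a b ∧ ∑ i : Fin m, x i.succ ^ 2 < ρ ^ 2}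
      = (⇑eq2 ∘ ⇑eq1) ⁻¹' ((Set.Ioo a b) ×ˢ C) := by
    ext x
    simp only [Set.mem_setOf_eq, Set.mem_preimage, Function.comp_apply, Set.mem_prod, hC,
      eq2, eq1, MeasurableEquiv.piFinSuccAbove, MeasurableEquiv.toLp_symm_apply,
      MeasurableEquiv.coe_mk, Equiv.coe_fn_mk, Equiv.coe_fn_symm_mk, Fin.insertNthEquiv,
      Fin.removeNth, Fin.zero_succAbove]
  rw [hset, hmp.measure_preimage ((measurableSet_Ioo.prod hCmeas).nullMeasurableSet),
    Measure.volume_eq_prod, Measure.prod_prod, Real.volume_Ioo, hCvol]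

lemma key_ineq (m : ℕ) {lam R r : ℝ} (hlam0 : 0 < lam) (hlam1 : lam < 1)
    (hR : 1 ≤ R) (hr : 0 < r) :
    (min r (R+1) - (R-1)) * (min r 1) ^ m * R ^ (lam * ((m:ℝ)+1))
      ≤ 2 ^ (m+1) * r ^ (lam * ((m:ℝ)+1)) := by
  have hR0 : (0:ℝ) < R := by linarith
  have hN : 0 < lam * ((m:ℝ)+1) := by positivity
  have h2 : (2:ℝ) ^ (lam * ((m:ℝ)+1)) ≤ 2 ^ (m+1) := by
    rw [← Real.rpow_natCast 2 (m+1)]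
    apply Real.rpow_le_rpow_of_exponent_le one_le_two
    push_cast
    nlinarith
  have hmin1 : (0:ℝ) ≤ min r 1 := le_min hr.le zero_le_one
  have hrpow : (0:ℝ) ≤ R ^ (lam * ((m:ℝ)+1)) := Real.rpow_nonneg hR0.le _
  have hrlamr : (0:ℝ) < r ^ (lam * ((m:ℝ)+1)) := Real.rpow_pos_of_pos hr _
  rcases le_or_gt r (R-1) with h | h
  · -- width nonpositive
    have hw : min r (R+1) - (R-1) ≤ 0 := by
      have := min_le_left r (R+1); linarith
    have : (min r (R+1) - (R-1)) * (min r 1) ^ m * R ^ (lam * ((m:ℝ)+1)) ≤ 0 :=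
      mul_nonpos_of_nonpos_of_nonneg
        (mul_nonpos_of_nonpos_of_nonneg hw (pow_nonneg hmin1 m)) hrpow
    exact this.trans (by positivity)
  rcases lt_or_ge r 1 with h1 | h1
  · -- R - 1 < r < 1, so R < 2
    have hR2 : R < 2 := by linarith
    have hminr : min r 1 = r := min_eq_left h1.le
    have hw : min r (R+1) - (R-1) ≤ r := by
      have := min_le_left r (R+1); linarith
    calc (min r (R+1) - (R-1)) * (min r 1) ^ m * R ^ (lam * ((m:ℝ)+1))
        ≤ r * r ^ m * (2:ℝ) ^ (lam * ((m:ℝ)+1)) := by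
          apply mul_le_mul _ (Real.rpow_le_rpow hR0.le hR2.le hN.le)
            hrpow (by positivity)
          rw [hminr]
          exact mul_le_mul_of_nonneg_right hw (pow_nonneg hr.le m)
      _ = r ^ (((m:ℝ)+1)) * (2:ℝ) ^ (lam * ((m:ℝ)+1)) := by
          rw [← pow_succ']
          congr 1
          rw [← Real.rpow_natCast r (m+1)]
          push_cast
          ring_nf
      _ = r ^ (lam * ((m:ℝ)+1)) * r ^ ((1-lam) * ((m:ℝ)+1)) * (2:ℝ) ^ (lam * ((m:ℝ)+1)) := by
          rw [← Real.rpow_add hr]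
          ring_nf
      _ ≤ r ^ (lam * ((m:ℝ)+1)) * 1 * (2:ℝ) ^ (m+1) := by
          apply mul_le_mul _ h2 (Real.rpow_nonneg (by norm_num : (0:ℝ) ≤ 2) _) (mul_nonneg hrlamr.le zero_le_one)
          apply mul_le_mul_of_nonneg_left _ hrlamr.le
          exact Real.rpow_le_one hr.le h1.le (mul_nonneg (by linarith) (by positivity))
      _ = 2 ^ (m+1) * r ^ (lam * ((m:ℝ)+1)) := by ring
  rcases le_or_gt r R with h2' | h2'
  · -- 1 ≤ r ≤ R
    have hw : min r (R+1) - (R-1) ≤ 1 := by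
      have := min_le_left r (R+1); linarith
    have hminr : min r 1 = 1 := min_eq_right h1
    have hR2r : R ≤ 2*r := by linarith
    calc (min r (R+1) - (R-1)) * (min r 1) ^ m * R ^ (lam * ((m:ℝ)+1))
        ≤ 1 * 1 * (2*r) ^ (lam * ((m:ℝ)+1)) := by
          apply mul_le_mul _ (Real.rpow_le_rpow hR0.le hR2r hN.le) hrpow (by norm_num)
          rw [hminr, one_pow, mul_one]; simpa using hw
      _ = 2 ^ (lam * ((m:ℝ)+1)) * r ^ (lam * ((m:ℝ)+1)) := by
          rw [one_mul, one_mul, Real.mul_rpow (by norm_num) hr.le]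
      _ ≤ 2 ^ (m+1) * r ^ (lam * ((m:ℝ)+1)) :=
          mul_le_mul_of_nonneg_right h2 hrlamr.le
  · -- r > R
    have hw : min r (R+1) - (R-1) ≤ 2 := by
      have := min_le_right r (R+1); linarith
    have hminr : min r 1 = 1 := min_eq_right h1
    have h2le : (2:ℝ) ≤ 2 ^ (m+1) := by
      calc (2:ℝ) = 2^1 := (pow_one 2).symm
      _ ≤ 2^(m+1) := pow_le_pow_right₀ one_le_two (by omega)
    calc (min r (R+1) - (R-1)) * (min r 1) ^ m * R ^ (lam * ((m:ℝ)+1))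
        ≤ 2 * 1 * r ^ (lam * ((m:ℝ)+1)) := by
          apply mul_le_mul _ (Real.rpow_le_rpow hR0.le h2'.le hN.le) hrpow (by norm_num)
          rw [hminr, one_pow]
          exact mul_le_mul_of_nonneg_right hw zero_le_one
      _ = 2 * r ^ (lam * ((m:ℝ)+1)) := by ring
      _ ≤ 2 ^ (m+1) * r ^ (lam * ((m:ℝ)+1)) := mul_le_mul_of_nonneg_right h2le hrlamr.le

lemma abs_coord_le_norm {N : ℕ} (y : EuclideanSpace ℝ (Fin N)) (i : Fin N) : |y i| ≤ ‖y‖ := by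
  rw [EuclideanSpace.norm_eq, ← Real.sqrt_sq_eq_abs]
  apply Real.sqrt_le_sqrt
  have := Finset.single_le_sum (f := fun j => ‖y j‖^2) (fun j _ => sq_nonneg _) (Finset.mem_univ i)
  simpa [Real.norm_eq_abs, sq_abs] using this

lemma norm_sq_eucl {N : ℕ} (y : EuclideanSpace ℝ (Fin N)) : ‖y‖^2 = ∑ i, (y i)^2 := by
  rw [EuclideanSpace.norm_eq, Real.sq_sqrt (by positivity)]
  simp [Real.norm_eq_abs, sq_abs]

set_option maxHeartbeats 1000000 in
/-- for R ≥ 1, x_R = (R,0,…,0) and f_R = χ_{B(x_R,1)},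
one has ‖f_R‖_{M^{Φ,λ}(0)} ≤ 1 / Φ⁻¹((v_n^λ/(2^n v_{n-1})) R^{λn}). -/
theorem statement12 (n : ℕ) (hn : 0 < n)
    (Φ Φinv : ℝ → ℝ) (hΦ : IsOrliczFunction Φ) (hΦinv : IsOrliczInverse Φ Φinv)
    (lam : ℝ) (hlam0 : 0 < lam) (hlam1 : lam < 1) (R : ℝ) (hR : 1 ≤ R) :
    centralNorm n (fun u => ENNReal.ofReal (Φ u)) lam
        (Set.indicator (Metric.ball (EuclideanSpace.single (⟨0, hn⟩ : Fin n) R) 1)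
          fun _ => (1 : ℝ))
      ≤ ENNReal.ofReal
          (1 / Φinv (unitBallVol n ^ lam / (2 ^ n * unitBallVol (n - 1))
              * R ^ (lam * n))) := by
  obtain ⟨m, rfl⟩ : ∃ m, n = m + 1 := ⟨n - 1, (Nat.succ_pred_eq_of_pos hn).symm⟩
  have hi0 : (⟨0, hn⟩ : Fin (m+1)) = (0 : Fin (m+1)) := rfl
  rw [hi0]
  simp only [Nat.add_sub_cancel]
  set v := unitBallVol (m+1) with hv
  set w := unitBallVol m with hw
  have hvpos : 0 < v := unitBallVol_pos _
  have hwpos : 0 < w := unitBallVol_pos _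
  have hR0 : (0:ℝ) < R := by linarith
  set c : ℝ := v ^ lam / (2 ^ (m+1) * w) * R ^ (lam * ((m+1 : ℕ) : ℝ)) with hcdef
  have hc : 0 < c :=
    mul_pos (div_pos (Real.rpow_pos_of_pos hvpos _) (by positivity))
      (Real.rpow_pos_of_pos hR0 _)
  obtain ⟨ht0, htPhi⟩ := hΦinv.2 c hc.le
  have ht : 0 < Φinv c := by
    rcases ht0.lt_or_eq with h | h
    · exact h
    · exfalso; apply hc.ne'; rw [← htPhi, ← h, hΦ.zero]
  set e : ℝ := 1 / Φinv c with hedef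
  have he : 0 < e := one_div_pos.mpr ht
  apply iSup_le
  rintro ⟨r, hr⟩
  apply sInf_le
  refine ⟨e, he, rfl, ?_⟩
  set xR : EuclideanSpace ℝ (Fin (m+1)) := EuclideanSpace.single (0 : Fin (m+1)) R with hxR
  set s : Set (EuclideanSpace ℝ (Fin (m+1))) := Metric.ball xR 1 with hs
  set B : Set (EuclideanSpace ℝ (Fin (m+1))) :=
    Metric.ball (0 : EuclideanSpace ℝ (Fin (m+1))) r with hB
  have hptwise : ∀ x, (fun u => ENNReal.ofReal (Φ u)) (|Set.indicator s (fun _ => (1:ℝ)) x| / e)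
      = s.indicator (fun _ => ENNReal.ofReal c) x := by
    intro x
    by_cases hx : x ∈ s
    · rw [Set.indicator_of_mem hx, Set.indicator_of_mem hx]
      simp only [abs_one, hedef, one_div_one_div]
      rw [htPhi]
    · rw [Set.indicator_of_notMem hx, Set.indicator_of_notMem hx]
      simp [hΦ.zero]
  rw [lintegral_congr hptwise, lintegral_indicator measurableSet_ball, setLIntegral_const,
    Measure.restrict_apply measurableSet_ball]
  have hρ : 0 < min r 1 := lt_min hr one_pos
  have hsub : s ∩ B ⊆ {x : EuclideanSpace ℝ (Fin (m+1)) |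
      x 0 ∈ Set.Ioo (R-1) (min r (R+1)) ∧ ∑ i : Fin m, x i.succ ^ 2 < (min r 1) ^ 2} := by
    rintro x ⟨hx1, hx2⟩
    have hd1 : ‖x - xR‖ < 1 := by rw [← dist_eq_norm]; exact Metric.mem_ball.mp hx1
    have hd2 : ‖x‖ < r := mem_ball_zero_iff.mp hx2
    have hc0 : (x - xR) 0 = x 0 - R := by
      simp [hxR, EuclideanSpace.single_apply]
    have h01 : |x 0 - R| < 1 := by
      rw [← hc0]; exact lt_of_le_of_lt (abs_coord_le_norm _ _) hd1
    have h01' := abs_lt.mp h01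
    have h0r : |x 0| < r := lt_of_le_of_lt (abs_coord_le_norm _ _) hd2
    have h0r' : x 0 < r := lt_of_le_of_lt (le_abs_self _) h0r
    have hcoord : ∀ i : Fin m, (x - xR) i.succ = x i.succ := by
      intro i
      simp [hxR, EuclideanSpace.single_apply, Fin.succ_ne_zero]
    have hsum1 : ∑ i : Fin m, x i.succ ^ 2 ≤ ‖x - xR‖ ^ 2 := by
      rw [norm_sq_eucl, Fin.sum_univ_succ]
      have : ∑ i : Fin m, x i.succ ^ 2 = ∑ i : Fin m, (x - xR) i.succ ^ 2 :=
        Finset.sum_congr rfl fun i _ => by rw [hcoord i]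
      rw [this]
      nlinarith [sq_nonneg ((x - xR) 0)]
    have hsum2 : ∑ i : Fin m, x i.succ ^ 2 ≤ ‖x‖ ^ 2 := by
      rw [norm_sq_eucl, Fin.sum_univ_succ]
      nlinarith [sq_nonneg (x 0)]
    refine ⟨⟨by linarith, lt_min h0r' (by linarith)⟩, ?_⟩
    rcases le_total r 1 with hcase | hcase
    · rw [min_eq_left hcase]
      exact lt_of_le_of_lt hsum2 (by nlinarith [norm_nonneg x])
    · rw [min_eq_right hcase, one_pow]
      exact lt_of_le_of_lt hsum1 (by nlinarith [norm_nonneg (x - xR)])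
  have hvolle : volume (s ∩ B) ≤
      ENNReal.ofReal (min r (R+1) - (R-1)) * ENNReal.ofReal (w * (min r 1) ^ m) :=
    le_trans (measure_mono hsub) (volume_slab_le m (R-1) (min r (R+1)) hρ)
  calc ENNReal.ofReal c * volume (s ∩ B)
      ≤ ENNReal.ofReal c *
        (ENNReal.ofReal (min r (R+1) - (R-1)) * ENNReal.ofReal (w * (min r 1) ^ m)) :=
        mul_le_mul_right hvolle _
    _ ≤ ENNReal.ofReal ((v * r ^ (m+1)) ^ lam) := by
        rcases le_or_gt (min r (R+1) - (R-1)) 0 with hW | hW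
        · rw [ENNReal.ofReal_eq_zero.mpr hW, zero_mul, mul_zero]
          exact zero_le
        · rw [← ENNReal.ofReal_mul hW.le, ← ENNReal.ofReal_mul hc.le]
          apply ENNReal.ofReal_le_ofReal
          have hkey := key_ineq m hlam0 hlam1 hR hr
          have hnn : (0:ℝ) ≤ v ^ lam * w / (2 ^ (m+1) * w) :=
            div_nonneg (mul_nonneg (Real.rpow_nonneg hvpos.le _) hwpos.le) (by positivity)
          calc c * ((min r (R+1) - (R-1)) * (w * (min r 1) ^ m))
              = (v ^ lam * w / (2 ^ (m+1) * w)) *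
                ((min r (R+1) - (R-1)) * (min r 1) ^ m * R ^ (lam * ((m:ℝ)+1))) := by
                rw [hcdef]; push_cast; ring
            _ ≤ (v ^ lam * w / (2 ^ (m+1) * w)) * (2 ^ (m+1) * r ^ (lam * ((m:ℝ)+1))) :=
                mul_le_mul_of_nonneg_left hkey hnn
            _ = v ^ lam * r ^ (lam * ((m:ℝ)+1)) := by
                field_simp
            _ = (v * r ^ (m+1)) ^ lam := by
                rw [Real.mul_rpow hvpos.le (by positivity), ← Real.rpow_natCast r (m+1),
                  ← Real.rpow_mul hr.le]
                congr 1
                push_cast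
                ring
    _ = ENNReal.ofReal ((volume B).toReal ^ lam) := by
        rw [hB, volume_ball_eucl _ _ hr,
          ENNReal.toReal_ofReal (mul_nonneg hvpos.le (pow_nonneg hr.le _))]
end
end

section
/- Let 0 < α < n, let Ψ be an Orlicz function with inverse Ψ^{-1}, R ≥ 1, x_R = (R, 0, …, 0) ∈ ℝ^n, and f_R = χ_{B(x_R,1)}. Then the Luxemburg norm of I_α f_R in the Orlicz space L^Ψ(ℝ^n) satisfies ‖I_α f_R‖_{L^Ψ(ℝ^n)} ≥ 2^{α−n} v_n / Ψ^{-1}(1/v_n), where v_n = π^{n/2}/Γ(n/2 + 1). -/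
open MeasureTheory ENNReal

noncomputable section

/-- The Luxemburg norm on the Orlicz space L^Ψ(ℝⁿ). -/
def orliczNorm (n : ℕ) (Ψ : ℝ → ℝ) (f : EuclideanSpace ℝ (Fin n) → ℝ) : ℝ≥0∞ :=
  sInf {ε : ℝ≥0∞ | ∃ e : ℝ, 0 < e ∧ ε = ENNReal.ofReal e ∧
    (∫⁻ x, ENNReal.ofReal (Ψ (|f x| / e))) ≤ 1}


section Stmt13Aux

open Metric

variable {n : ℕ}

lemma stmt13_vol_singleton (hn : 0 < n) (x : EuclideanSpace ℝ (Fin n)) :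
    volume ({x} : Set (EuclideanSpace ℝ (Fin n))) = 0 := by
  have h := Measure.addHaar_closedBall (μ := volume) x (r := 0) le_rfl
  rw [Metric.closedBall_zero] at h
  rw [h, finrank_euclideanSpace, Fintype.card_fin, zero_pow hn.ne', ENNReal.ofReal_zero,
    zero_mul]

lemma stmt13_vol_ball_one (hn : 0 < n) (x : EuclideanSpace ℝ (Fin n)) :
    volume (Metric.ball x 1) = ENNReal.ofReal (unitBallVol n) := by
  haveI : Nonempty (Fin n) := ⟨⟨0, hn⟩⟩
  rw [EuclideanSpace.volume_ball]
  simp only [Fintype.card_fin, ENNReal.ofReal_one, one_pow, one_mul]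
  congr 2
  rw [Real.sqrt_eq_rpow, ← Real.rpow_natCast (Real.pi ^ ((1:ℝ)/2)) n,
    ← Real.rpow_mul Real.pi_nonneg, show (1:ℝ)/2 * ((n:ℕ):ℝ) = ((n:ℕ):ℝ)/2 by ring]

lemma stmt13_unitBallVol_pos (hn : 0 < n) : 0 < unitBallVol n := by
  unfold unitBallVol
  exact div_pos (Real.rpow_pos_of_pos Real.pi_pos _)
    (Real.Gamma_pos_of_pos (by positivity))

lemma stmt13_kernel_integrable (hn : 0 < n) {α : ℝ} (hα0 : 0 < α) (hαn : α < n)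
    (x : EuclideanSpace ℝ (Fin n)) :
    IntegrableOn (fun y => ‖x - y‖ ^ (α - (n : ℝ))) (Metric.ball x 2) volume := by
  classical
  have h12 : (0:ℝ) ≤ 1/2 := by norm_num
  have hmeas : Measurable (fun y : EuclideanSpace ℝ (Fin n) => ‖x - y‖ ^ (α - (n : ℝ))) := by
    have h1 : Measurable fun y : EuclideanSpace ℝ (Fin n) =>
        Real.exp (Real.log ‖x - y‖ * (α - (n : ℝ))) :=
      ((Real.measurable_log.comp ((measurable_const.sub measurable_id).norm)).mul_const _).exp
    have h2 : (fun y : EuclideanSpace ℝ (Fin n) => ‖x - y‖ ^ (α - (n : ℝ))) =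
        Set.piecewise {x} (fun _ => (0:ℝ))
          (fun y => Real.exp (Real.log ‖x - y‖ * (α - (n : ℝ)))) := by
      classical
      funext y
      by_cases hy : y = x
      · subst hy
        rw [Set.piecewise_eq_of_mem _ _ _ (Set.mem_singleton _), sub_self, norm_zero,
          Real.zero_rpow (sub_neg.2 hαn).ne]
      · rw [Set.piecewise_eq_of_notMem _ _ _ (by simpa using hy),
          Real.rpow_def_of_pos (by rw [norm_pos_iff, sub_ne_zero]; exact Ne.symm hy)]
    rw [h2]
    exact Measurable.piecewise (measurableSet_singleton x) measurable_const h1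
  constructor
  · exact hmeas.aestronglyMeasurable.restrict
  · rw [hasFiniteIntegral_iff_ofReal (ae_of_all _ fun y => Real.rpow_nonneg (norm_nonneg _) _)]
    set S : ℕ → Set (EuclideanSpace ℝ (Fin n)) :=
      fun k => Metric.closedBall x (2 * (1/2:ℝ)^k) \ Metric.ball x ((1/2:ℝ)^k) with hS
    have cover : Metric.ball x 2 ⊆ {x} ∪ ⋃ k, S k := by
      intro y hy
      by_cases hyx : y = x
      · exact Or.inl (by simp [hyx])
      right
      have hd : 0 < dist y x := dist_pos.2 hyx
      have hex : ∃ k : ℕ, (1/2:ℝ)^k < dist y x :=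
        exists_pow_lt_of_lt_one hd (by norm_num)
      refine Set.mem_iUnion.2 ⟨Nat.find hex, ?_, ?_⟩
      · rw [Metric.mem_closedBall]
        rcases Nat.eq_zero_or_pos (Nat.find hex) with h0 | hpos
        · rw [h0, pow_zero, mul_one]
          exact (Metric.mem_ball.1 hy).le
        · have hm := Nat.find_min hex (Nat.sub_lt hpos one_pos)
          push_neg at hm
          have hk : Nat.find hex = (Nat.find hex - 1) + 1 := (Nat.sub_add_cancel hpos).symm
          have heq : 2 * (1/2:ℝ)^(Nat.find hex) = (1/2:ℝ) ^ (Nat.find hex - 1) := by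
            conv_lhs => rw [hk]
            rw [pow_succ]
            ring
          calc dist y x ≤ (1/2:ℝ) ^ (Nat.find hex - 1) := hm
            _ = 2 * (1/2:ℝ)^(Nat.find hex) := heq.symm
      · intro hmem
        exact absurd (Metric.mem_ball.1 hmem) (not_lt.2 (Nat.find_spec hex).le)
    have hzero : ∫⁻ y in ({x} : Set (EuclideanSpace ℝ (Fin n))),
        ENNReal.ofReal (‖x - y‖ ^ (α - (n : ℝ))) = 0 :=
      setLIntegral_measure_zero _ _ (stmt13_vol_singleton hn x)
    set V : ℝ≥0∞ := volume (Metric.ball (0 : EuclideanSpace ℝ (Fin n)) 1) with hV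
    have hVfin : V < ⊤ := measure_ball_lt_top
    have hterm : ∀ k : ℕ, ∫⁻ y in S k, ENNReal.ofReal (‖x - y‖ ^ (α - (n : ℝ)))
        ≤ ENNReal.ofReal ((2:ℝ)^n * ((1/2:ℝ)^α)^k) * V := by
      intro k
      have hb : ∀ y ∈ S k, ENNReal.ofReal (‖x - y‖ ^ (α - (n : ℝ)))
          ≤ ENNReal.ofReal (((1/2:ℝ)^k) ^ (α - (n : ℝ))) := by
        intro y hy
        apply ENNReal.ofReal_le_ofReal
        have h1 : (1/2:ℝ)^k ≤ ‖x - y‖ := by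
          have := hy.2
          rw [Metric.mem_ball, not_lt, dist_comm] at this
          rwa [← dist_eq_norm]
        exact Real.rpow_le_rpow_of_nonpos (by positivity) h1 (by linarith)
      have hSm : MeasurableSet (S k) :=
        measurableSet_closedBall.diff measurableSet_ball
      calc ∫⁻ y in S k, ENNReal.ofReal (‖x - y‖ ^ (α - (n : ℝ)))
          ≤ ∫⁻ _ in S k, ENNReal.ofReal (((1/2:ℝ)^k) ^ (α - (n : ℝ))) :=
            setLIntegral_mono' hSm hb
        _ = ENNReal.ofReal (((1/2:ℝ)^k) ^ (α - (n : ℝ))) * volume (S k) :=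
            setLIntegral_const _ _
        _ ≤ ENNReal.ofReal (((1/2:ℝ)^k) ^ (α - (n : ℝ))) *
              (ENNReal.ofReal ((2 * (1/2:ℝ)^k)^n) * V) := by
            gcongr
            have := Measure.addHaar_closedBall (μ := volume) x
              (r := 2 * (1/2:ℝ)^k) (by positivity)
            rw [finrank_euclideanSpace, Fintype.card_fin] at this
            calc volume (S k) ≤ volume (Metric.closedBall x (2 * (1/2:ℝ)^k)) :=
                  measure_mono Set.diff_subset
              _ = ENNReal.ofReal ((2 * (1/2:ℝ)^k)^n) * V := this
        _ = ENNReal.ofReal ((2:ℝ)^n * ((1/2:ℝ)^α)^k) * V := by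
            rw [← mul_assoc, ← ENNReal.ofReal_mul (Real.rpow_nonneg (by positivity) _)]
            congr 2
            rw [← Real.rpow_natCast (1/2:ℝ) k, ← Real.rpow_mul h12, mul_pow,
              ← Real.rpow_natCast ((1/2:ℝ) ^ ((k:ℝ))) n, ← Real.rpow_mul h12,
              ← Real.rpow_natCast ((1/2:ℝ)^α) k, ← Real.rpow_mul h12]
            rw [mul_comm (((1:ℝ)/2) ^ ((k:ℝ) * (α - (n:ℝ)))) _, mul_assoc,
              ← Real.rpow_add (by norm_num : (0:ℝ) < 1/2)]
            congr 1
            ring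
    calc ∫⁻ y in Metric.ball x 2, ENNReal.ofReal (‖x - y‖ ^ (α - (n : ℝ)))
        ≤ ∫⁻ y in ({x} ∪ ⋃ k, S k), ENNReal.ofReal (‖x - y‖ ^ (α - (n : ℝ))) :=
        lintegral_mono_set cover
    _ ≤ (∫⁻ y in ({x} : Set (EuclideanSpace ℝ (Fin n))),
            ENNReal.ofReal (‖x - y‖ ^ (α - (n : ℝ)))) +
          ∫⁻ y in (⋃ k, S k), ENNReal.ofReal (‖x - y‖ ^ (α - (n : ℝ))) :=
        lintegral_union_le _ _ _
    _ = ∫⁻ y in (⋃ k, S k), ENNReal.ofReal (‖x - y‖ ^ (α - (n : ℝ))) := by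
        rw [hzero, zero_add]
    _ ≤ ∑' k, ∫⁻ y in S k, ENNReal.ofReal (‖x - y‖ ^ (α - (n : ℝ))) :=
        lintegral_iUnion_le _ _
    _ ≤ ∑' k, ENNReal.ofReal ((2:ℝ)^n * ((1/2:ℝ)^α)^k) * V :=
        ENNReal.tsum_le_tsum fun k => hterm k
    _ = (∑' k : ℕ, ENNReal.ofReal ((2:ℝ)^n) * (ENNReal.ofReal ((1/2:ℝ)^α))^k) * V := by
        rw [← ENNReal.tsum_mul_right]
        congr 1
        funext k
        have hp : (0:ℝ) ≤ (1/2:ℝ) ^ α := Real.rpow_nonneg (by norm_num) _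
        rw [ENNReal.ofReal_mul (by positivity : (0:ℝ) ≤ (2:ℝ)^n),
          ENNReal.ofReal_pow hp]
    _ = ENNReal.ofReal ((2:ℝ)^n) * (1 - ENNReal.ofReal ((1/2:ℝ)^α))⁻¹ * V := by
        rw [ENNReal.tsum_mul_left, ENNReal.tsum_geometric]
    _ < ⊤ := by
        have hr1 : ENNReal.ofReal ((1/2:ℝ)^α) < 1 := by
          rw [← ENNReal.ofReal_one]
          exact ENNReal.ofReal_lt_ofReal_iff_of_nonneg (Real.rpow_nonneg (by norm_num) _) |>.2
            (Real.rpow_lt_one (by norm_num) (by norm_num) hα0)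
        have h2 : (1 - ENNReal.ofReal ((1/2:ℝ)^α))⁻¹ < ⊤ :=
          ENNReal.inv_lt_top.2 (tsub_pos_of_lt hr1)
        exact ENNReal.mul_lt_top
          (ENNReal.mul_lt_top ENNReal.ofReal_lt_top h2) hVfin

lemma stmt13_riesz_lb (hn : 0 < n) {α : ℝ} (hα0 : 0 < α) (hαn : α < n)
    (z x : EuclideanSpace ℝ (Fin n)) (hx : x ∈ Metric.ball z 1) :
    (2:ℝ) ^ (α - (n : ℝ)) * unitBallVol n ≤
      rieszPotential n α (Set.indicator (Metric.ball z 1) fun _ => (1:ℝ)) x := by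
  set B := Metric.ball z 1 with hB
  have step1 : rieszPotential n α (Set.indicator B fun _ => (1:ℝ)) x
      = ∫ y in B, ‖x - y‖ ^ (α - (n : ℝ)) := by
    unfold rieszPotential
    rw [← integral_indicator measurableSet_ball]
    congr 1
    funext y
    by_cases hy : y ∈ B <;> simp [Set.indicator_of_mem, Set.indicator_of_notMem, hy, ← hB]
  have hsub : B ⊆ Metric.ball x 2 := by
    intro y hy
    rw [Metric.mem_ball] at *
    calc dist y x ≤ dist y z + dist z x := dist_triangle _ _ _
      _ < 2 := by rw [dist_comm z x]; linarith
  have hker : IntegrableOn (fun y => ‖x - y‖ ^ (α - (n : ℝ))) B volume :=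
    (stmt13_kernel_integrable hn hα0 hαn x).mono_set hsub
  have hae : ∀ᵐ y ∂(volume : Measure (EuclideanSpace ℝ (Fin n))),
      y ∈ B → (2:ℝ) ^ (α - (n : ℝ)) ≤ ‖x - y‖ ^ (α - (n : ℝ)) := by
    filter_upwards [compl_mem_ae_iff.2 (stmt13_vol_singleton hn x)] with y hy hyB
    have hyx : y ≠ x := by simpa using hy
    have hpos : 0 < ‖x - y‖ := by
      rw [norm_pos_iff, sub_ne_zero]
      exact Ne.symm hyx
    have hle : ‖x - y‖ ≤ 2 := by
      rw [← dist_eq_norm]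
      calc dist x y ≤ dist x z + dist z y := dist_triangle _ _ _
        _ ≤ 2 := by
          have h1 : dist x z < 1 := Metric.mem_ball.1 hx
          have h2 : dist z y < 1 := by rw [dist_comm]; exact Metric.mem_ball.1 hyB
          linarith
    exact Real.rpow_le_rpow_of_nonpos hpos hle (by linarith)
  calc (2:ℝ) ^ (α - (n : ℝ)) * unitBallVol n
      = (volume B).toReal • ((2:ℝ) ^ (α - (n : ℝ))) := by
        rw [hB, stmt13_vol_ball_one hn z,
          ENNReal.toReal_ofReal (stmt13_unitBallVol_pos hn).le, smul_eq_mul, mul_comm]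
    _ = ∫ _ in B, (2:ℝ) ^ (α - (n : ℝ)) := (setIntegral_const _).symm
    _ ≤ ∫ y in B, ‖x - y‖ ^ (α - (n : ℝ)) :=
        setIntegral_mono_on_ae
          (integrableOn_const measure_ball_lt_top.ne) hker measurableSet_ball hae
    _ = rieszPotential n α (Set.indicator B fun _ => (1:ℝ)) x := step1.symm

lemma stmt13_psi_nonneg {Ψ : ℝ → ℝ} (hΨ : IsOrliczFunction Ψ) {u : ℝ} (hu : 0 ≤ u) :
    0 ≤ Ψ u := by
  have := hΨ.strictMono.monotoneOn (Set.mem_Ici.2 le_rfl) (Set.mem_Ici.2 hu) hu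
  rwa [hΨ.zero] at this

end Stmt13Aux

/-- for R ≥ 1, x_R = (R,0,…,0) and f_R = χ_{B(x_R,1)},
one has ‖I_α f_R‖_{L^Ψ(ℝⁿ)} ≥ 2^{α-n} v_n / Ψ⁻¹(1/v_n). -/
theorem statement13 (n : ℕ) (hn : 0 < n) (α : ℝ) (hα0 : 0 < α) (hαn : α < n)
    (Ψ Ψinv : ℝ → ℝ) (hΨ : IsOrliczFunction Ψ) (hΨinv : IsOrliczInverse Ψ Ψinv)
    (R : ℝ) (hR : 1 ≤ R) :
    ENNReal.ofReal ((2 : ℝ) ^ (α - n) * unitBallVol n / Ψinv (1 / unitBallVol n))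
      ≤ orliczNorm n Ψ (rieszPotential n α
          (Set.indicator (Metric.ball (EuclideanSpace.single (⟨0, hn⟩ : Fin n) R) 1)
            fun _ => (1 : ℝ))) := by
  classical
  set xR : EuclideanSpace ℝ (Fin n) := EuclideanSpace.single (⟨0, hn⟩ : Fin n) R with hxR
  set B := Metric.ball xR 1 with hB
  set g := rieszPotential n α (Set.indicator B fun _ => (1:ℝ)) with hg
  have hv : 0 < unitBallVol n := stmt13_unitBallVol_pos hn
  obtain ⟨hψ0, hψeq⟩ := hΨinv.2 (1 / unitBallVol n) (by positivity)
  set ψ := Ψinv (1 / unitBallVol n) with hψ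
  have hψpos : 0 < ψ := by
    rcases hψ0.lt_or_eq with h | h
    · exact h
    · exfalso
      rw [← h, hΨ.zero] at hψeq
      have : (0:ℝ) < 1 / unitBallVol n := by positivity
      linarith
  set c := (2:ℝ) ^ (α - (n:ℝ)) * unitBallVol n with hc
  have hcpos : 0 < c := mul_pos (Real.rpow_pos_of_pos two_pos _) hv
  apply le_sInf
  rintro ε ⟨e, he, rfl, hint⟩
  apply ENNReal.ofReal_le_ofReal
  have hglb : ∀ x ∈ B, c ≤ g x := fun x hx => stmt13_riesz_lb hn hα0 hαn xR x hx
  have hkey : Ψ (c / e) * unitBallVol n ≤ 1 := by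
    have hchain : ENNReal.ofReal (Ψ (c / e)) * ENNReal.ofReal (unitBallVol n) ≤ 1 := by
      calc ENNReal.ofReal (Ψ (c / e)) * ENNReal.ofReal (unitBallVol n)
          = ENNReal.ofReal (Ψ (c / e)) * volume B := by rw [hB, stmt13_vol_ball_one hn xR]
        _ = ∫⁻ _ in B, ENNReal.ofReal (Ψ (c / e)) := (setLIntegral_const _ _).symm
        _ ≤ ∫⁻ x in B, ENNReal.ofReal (Ψ (|g x| / e)) := by
            apply lintegral_mono_ae
            rw [ae_restrict_iff' measurableSet_ball]
            apply ae_of_all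
            intro x hx
            apply ENNReal.ofReal_le_ofReal
            have h1 : c ≤ |g x| := (hglb x hx).trans (le_abs_self _)
            have h2 : c / e ≤ |g x| / e := by gcongr
            exact hΨ.strictMono.monotoneOn
              (Set.mem_Ici.2 (by positivity))
              (Set.mem_Ici.2 (by positivity)) h2
        _ ≤ ∫⁻ x, ENNReal.ofReal (Ψ (|g x| / e)) := setLIntegral_le_lintegral _ _
        _ ≤ 1 := hint
    rw [← ENNReal.ofReal_mul (stmt13_psi_nonneg hΨ (by positivity))] at hchain
    exact ENNReal.ofReal_le_one.1 hchain
  have hlt : Ψ (c / e) ≤ 1 / unitBallVol n := (le_div_iff₀ hv).2 hkey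
  have hce : c / e ≤ ψ := by
    by_contra h
    push_neg at h
    have := hΨ.strictMono (Set.mem_Ici.2 hψ0) (Set.mem_Ici.2 (by positivity)) h
    rw [hψeq] at this
    linarith
  have hfin : c ≤ ψ * e := by
    rw [div_le_iff₀ he] at hce
    linarith
  rw [div_le_iff₀ hψpos]
  nlinarith [hfin]
end
end

section
/- Let 0 < α < n, 0 < λ < 1, and let Φ, Ψ be Orlicz functions. Then the Riesz potential I_α is not bounded from the central Morrey–Orlicz space M^{Φ,λ}(0) to the Orlicz space L^Ψ(ℝ^n): there is no constant C > 0 such that ‖I_α f‖_{L^Ψ(ℝ^n)} ≤ C ‖f‖_{M^{Φ,λ}(0)} for all f ∈ M^{Φ,λ}(0). -/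
open MeasureTheory ENNReal

noncomputable section

open Metric Set

lemma IsOrliczFunction.nonneg {Ψ : ℝ → ℝ} (h : IsOrliczFunction Ψ) {t : ℝ} (ht : 0 ≤ t) :
    0 ≤ Ψ t := by
  rcases eq_or_lt_of_le ht with rfl | ht'
  · exact le_of_eq h.zero.symm
  · exact le_of_lt (h.zero ▸ h.strictMono (Set.mem_Ici.2 le_rfl) (Set.mem_Ici.2 ht) ht')

lemma IsOrliczFunction.pos {Ψ : ℝ → ℝ} (h : IsOrliczFunction Ψ) {t : ℝ} (ht : 0 < t) :
    0 < Ψ t := h.zero ▸ h.strictMono (Set.mem_Ici.2 le_rfl) (Set.mem_Ici.2 ht.le) ht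

lemma IsOrliczFunction.exists_large {Ψ : ℝ → ℝ} (h : IsOrliczFunction Ψ) (B : ℝ) :
    ∃ M : ℝ, 0 < M ∧ B < Ψ M := by
  have h1 : 0 < Ψ 1 := h.pos one_pos
  set k : ℝ := max 1 ((B + 1) / Ψ 1) with hk_def
  have hk1 : (1 : ℝ) ≤ k := le_max_left _ _
  have hk0 : (0 : ℝ) < k := lt_of_lt_of_le one_pos hk1
  have hconv := h.convex.2 (Set.mem_Ici.2 le_rfl) (Set.mem_Ici.2 hk0.le)
    (show (0:ℝ) ≤ 1 - 1/k by
      have : 1/k ≤ 1 := by rw [div_le_one hk0]; exact hk1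
      linarith)
    (show (0:ℝ) ≤ 1/k by positivity)
    (by ring)
  have heval : (1 - 1/k) • (0:ℝ) + (1/k) • k = 1 := by rw [smul_zero, zero_add, smul_eq_mul, one_div, inv_mul_cancel₀ hk0.ne']
  rw [heval, h.zero, smul_eq_mul, smul_eq_mul, mul_zero, zero_add] at hconv
  have hkΨ : k * Ψ 1 ≤ Ψ k := by
    have := mul_le_mul_of_nonneg_left hconv hk0.le
    rwa [← mul_assoc, mul_one_div, div_self hk0.ne', one_mul] at this
  refine ⟨k, hk0, ?_⟩
  have h2 : (B + 1) / Ψ 1 ≤ k := le_max_right _ _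
  have h3 : (B + 1) / Ψ 1 * Ψ 1 ≤ k * Ψ 1 := mul_le_mul_of_nonneg_right h2 h1.le
  rw [div_mul_cancel₀ _ h1.ne'] at h3
  linarith


/-- for 0 < α < n and 0 < λ < 1, the Riesz potential is never
bounded from M^{Φ,λ}(0) into the Orlicz space L^Ψ(ℝⁿ). -/

theorem statement14 (n : ℕ) (hn : 0 < n) (α : ℝ) (hα0 : 0 < α) (hαn : α < n)
    (lam : ℝ) (hlam0 : 0 < lam) (hlam1 : lam < 1)
    (Φ Ψ : ℝ → ℝ) (hΦ : IsOrliczFunction Φ) (hΨ : IsOrliczFunction Ψ) :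
    ¬ ∃ C : ℝ, 0 < C ∧ ∀ f : EuclideanSpace ℝ (Fin n) → ℝ,
        MemCentralMorreyOrlicz n Φ lam f →
          orliczNorm n Ψ (rieszPotential n α f)
            ≤ ENNReal.ofReal C * centralNorm n (fun u => ENNReal.ofReal (Φ u)) lam f := by
  rintro ⟨C, hC, hbound⟩
  -- a unit vector
  set u : EuclideanSpace ℝ (Fin n) := EuclideanSpace.single (⟨0, hn⟩ : Fin n) (1:ℝ) with hu_def
  have hu : ‖u‖ = 1 := by simp [hu_def, EuclideanSpace.norm_single]
  haveI : Nontrivial (EuclideanSpace ℝ (Fin n)) :=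
    ⟨⟨u, 0, by intro h; rw [h] at hu; simp at hu⟩⟩
  set v : ℝ := (volume (ball (0 : EuclideanSpace ℝ (Fin n)) 1)).toReal with hv_def
  have hvfin : volume (ball (0 : EuclideanSpace ℝ (Fin n)) 1) ≠ ⊤ := measure_ball_lt_top.ne
  have hv : 0 < v := ENNReal.toReal_pos (ne_of_gt (measure_ball_pos _ _ one_pos)) hvfin
  have hball : ∀ (x : EuclideanSpace ℝ (Fin n)) (r : ℝ), 0 ≤ r →
      volume (ball x r) = ENNReal.ofReal (r ^ n) * volume (ball (0 : EuclideanSpace ℝ (Fin n)) 1) := by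
    intro x r hr
    rw [Measure.addHaar_ball volume x hr, finrank_euclideanSpace_fin]
  have hball1 : ∀ x : EuclideanSpace ℝ (Fin n), volume (ball x 1) = ENNReal.ofReal v := by
    intro x
    rw [hball x 1 zero_le_one, one_pow, ENNReal.ofReal_one, one_mul, hv_def,
      ENNReal.ofReal_toReal hvfin]
  -- constants
  set δ : ℝ := 5 ^ (α - (n:ℝ)) * v with hδ_def
  have hδ : 0 < δ := mul_pos (Real.rpow_pos_of_pos (by norm_num) _) hv
  obtain ⟨M, hM0, hMΨ⟩ := hΨ.exists_large v⁻¹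
  set e₀ : ℝ := δ / M with he₀_def
  have he₀ : 0 < e₀ := div_pos hδ hM0
  set e₁ : ℝ := min (e₀ / (2*C)) 1 with he₁_def
  have he₁ : 0 < e₁ := lt_min (by positivity) one_pos
  set P : ℝ := Φ (1/e₁) with hP_def
  have hP : 0 < P := hΦ.pos (by positivity)
  set K : ℝ := max (P * v) 1 with hK_def
  have hK1 : (1:ℝ) ≤ K := le_max_right _ _
  have hK0 : (0:ℝ) < K := lt_of_lt_of_le one_pos hK1
  set a : ℝ := K ^ (1/lam) / v with ha_def
  have ha : 0 < a := div_pos (Real.rpow_pos_of_pos hK0 _) hv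
  set s : ℝ := max 1 (a ^ (1/(n:ℝ))) with hs_def
  have hs1 : (1:ℝ) ≤ s := le_max_left _ _
  have hs0 : (0:ℝ) < s := lt_of_lt_of_le one_pos hs1
  have hnR : (0:ℝ) < (n:ℝ) := by exact_mod_cast hn
  have hsn : a ≤ s ^ n := by
    have h1 : a ^ ((1:ℝ)/(n:ℝ)) ≤ s := le_max_right _ _
    have h2 : (a ^ ((1:ℝ)/(n:ℝ))) ^ ((n:ℝ)) ≤ s ^ ((n:ℝ)) :=
      Real.rpow_le_rpow (Real.rpow_nonneg ha.le _) h1 hnR.le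
    rw [← Real.rpow_natCast s n, ← Real.rpow_mul ha.le, one_div,
      inv_mul_cancel₀ hnR.ne', Real.rpow_one] at *
    exact h2
  have hKs : K ≤ (s ^ n * v) ^ lam := by
    have hav : a * v = K ^ (1/lam) := div_mul_cancel₀ _ hv.ne'
    have h2 : K ^ (1/lam) ≤ s ^ n * v := by
      rw [← hav]; exact mul_le_mul_of_nonneg_right hsn hv.le
    calc K = (K ^ ((1:ℝ)/lam)) ^ lam := by
            rw [← Real.rpow_mul hK0.le, one_div, inv_mul_cancel₀ hlam0.ne', Real.rpow_one]
      _ ≤ (s ^ n * v) ^ lam := Real.rpow_le_rpow (Real.rpow_nonneg hK0.le _) h2 hlam0.le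
  -- centers
  set c : EuclideanSpace ℝ (Fin n) := (s+1) • u with hc_def
  set c' : EuclideanSpace ℝ (Fin n) := (s+4) • u with hc'_def
  have hc_norm : ‖c‖ = s + 1 := by
    rw [hc_def, norm_smul, hu, mul_one, Real.norm_eq_abs, abs_of_pos (by linarith)]
  have hcc' : ‖c' - c‖ = 3 := by
    have : c' - c = (3:ℝ) • u := by rw [hc'_def, hc_def, ← sub_smul]; norm_num
    rw [this, norm_smul, hu, mul_one, Real.norm_eq_abs]; norm_num
  -- test function
  set f : EuclideanSpace ℝ (Fin n) → ℝ := (ball c 1).indicator (fun _ => (1:ℝ)) with hf_def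
  have hfint : Integrable f volume := by
    rw [hf_def, integrable_indicator_iff measurableSet_ball]
    exact integrableOn_const measure_ball_lt_top.ne
  -- central norm bound
  have hlux : ∀ r : ℝ, 0 < r →
      (∫⁻ x in ball (0:(EuclideanSpace ℝ (Fin n))) r, ENNReal.ofReal (Φ (|f x| / e₁)))
        ≤ ENNReal.ofReal ((volume (ball (0:(EuclideanSpace ℝ (Fin n))) r)).toReal ^ lam) := by
    intro r hr
    have hfx : ∀ x : EuclideanSpace ℝ (Fin n), ENNReal.ofReal (Φ (|f x| / e₁))
        = (ball c 1).indicator (fun _ => ENNReal.ofReal P) x := by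
      intro x
      by_cases hx : x ∈ ball c 1
      · simp [hf_def, Set.indicator_of_mem hx, hP_def, abs_one]
      · simp [hf_def, Set.indicator_of_notMem hx, hΦ.zero]
    have hcalc : (∫⁻ x in ball (0:(EuclideanSpace ℝ (Fin n))) r, ENNReal.ofReal (Φ (|f x| / e₁)))
        = ENNReal.ofReal P * volume (ball c 1 ∩ ball (0:(EuclideanSpace ℝ (Fin n))) r) := by
      rw [lintegral_congr hfx, lintegral_indicator measurableSet_ball,
        setLIntegral_const, Measure.restrict_apply measurableSet_ball]
    rw [hcalc]
    rcases le_or_gt r s with hrs | hrs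
    · have hempty : ball c 1 ∩ ball (0:(EuclideanSpace ℝ (Fin n))) r = ∅ := by
        ext x
        simp only [Set.mem_inter_iff, mem_ball, Set.mem_empty_iff_false, iff_false, not_and]
        intro h1 h2
        have h3 : ‖c‖ ≤ ‖c - x‖ + ‖x‖ := by
          calc ‖c‖ = ‖c - x + x‖ := by rw [sub_add_cancel]
            _ ≤ ‖c - x‖ + ‖x‖ := norm_add_le _ _
        rw [hc_norm] at h3
        have h4 : ‖c - x‖ < 1 := by rw [norm_sub_rev]; exact mem_ball_iff_norm.1 h1
        have h5 : ‖x‖ < r := mem_ball_zero_iff.1 h2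
        linarith
      rw [hempty]; simp
    · have hvol : volume (ball c 1 ∩ ball (0:(EuclideanSpace ℝ (Fin n))) r) ≤ ENNReal.ofReal v := by
        rw [← hball1 c]; exact measure_mono Set.inter_subset_left
      have htr : (volume (ball (0:(EuclideanSpace ℝ (Fin n))) r)).toReal = r ^ n * v := by
        rw [hball 0 r hr.le, ENNReal.toReal_mul, ENNReal.toReal_ofReal (by positivity), hv_def]
      rw [htr]
      calc ENNReal.ofReal P * volume (ball c 1 ∩ ball (0:(EuclideanSpace ℝ (Fin n))) r)
          ≤ ENNReal.ofReal P * ENNReal.ofReal v := mul_le_mul_right hvol _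
        _ = ENNReal.ofReal (P * v) := (ENNReal.ofReal_mul hP.le).symm
        _ ≤ ENNReal.ofReal ((r ^ n * v) ^ lam) := by
            apply ENNReal.ofReal_le_ofReal
            calc P * v ≤ K := le_max_left _ _
              _ ≤ (s ^ n * v) ^ lam := hKs
              _ ≤ (r ^ n * v) ^ lam := by
                  apply Real.rpow_le_rpow (by positivity) ?_ hlam0.le
                  have : s ^ n ≤ r ^ n := pow_le_pow_left₀ hs0.le hrs.le n
                  exact mul_le_mul_of_nonneg_right this hv.le
  have hcent : centralNorm n (fun t => ENNReal.ofReal (Φ t)) lam f ≤ ENNReal.ofReal e₁ := by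
    refine iSup_le fun r => sInf_le ?_
    exact ⟨e₁, he₁, rfl, hlux r.1 r.2⟩
  have hmem : MemCentralMorreyOrlicz n Φ lam f :=
    ⟨hfint.locallyIntegrable, lt_of_le_of_lt hcent ENNReal.ofReal_lt_top⟩
  -- Riesz potential lower bound on ball c' 1
  set g : EuclideanSpace ℝ (Fin n) → ℝ := rieszPotential n α f with hg_def
  have hαn' : α - (n:ℝ) ≤ 0 := by
    have : α ≤ (n:ℝ) := hαn.le
    linarith
  have hglow : ∀ x ∈ ball c' 1, δ ≤ |g x| := by
    intro x hx
    have hxc' : ‖x - c'‖ < 1 := mem_ball_iff_norm.1 hx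
    have hdist : ∀ y ∈ ball c 1, 1 ≤ ‖x - y‖ ∧ ‖x - y‖ ≤ 5 := by
      intro y hy
      have hyc : ‖y - c‖ < 1 := mem_ball_iff_norm.1 hy
      constructor
      · have h1 : ‖c' - c‖ ≤ ‖c' - x‖ + ‖x - y‖ + ‖y - c‖ := by
          calc ‖c' - c‖ = ‖(c' - x) + (x - y) + (y - c)‖ := by abel_nf
            _ ≤ ‖(c' - x) + (x - y)‖ + ‖y - c‖ := norm_add_le _ _
            _ ≤ ‖c' - x‖ + ‖x - y‖ + ‖y - c‖ := by
                exact add_le_add (norm_add_le _ _) le_rfl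
        rw [hcc'] at h1
        have h2 : ‖c' - x‖ < 1 := by rw [norm_sub_rev]; exact hxc'
        linarith
      · have h1 : ‖x - y‖ ≤ ‖x - c'‖ + ‖c' - c‖ + ‖c - y‖ := by
          calc ‖x - y‖ = ‖(x - c') + (c' - c) + (c - y)‖ := by abel_nf
            _ ≤ ‖(x - c') + (c' - c)‖ + ‖c - y‖ := norm_add_le _ _
            _ ≤ ‖x - c'‖ + ‖c' - c‖ + ‖c - y‖ := add_le_add (norm_add_le _ _) le_rfl
        rw [hcc'] at h1
        have h2 : ‖c - y‖ < 1 := by rw [norm_sub_rev]; exact hyc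
        linarith
    have hkermeas : Measurable fun y : EuclideanSpace ℝ (Fin n) => ‖x - y‖ ^ (α - (n:ℝ)) :=
      (measurable_const.sub measurable_id).norm.pow_const (α - (n:ℝ))
    have hkint : IntegrableOn (fun y : EuclideanSpace ℝ (Fin n) => ‖x - y‖ ^ (α - (n:ℝ))) (ball c 1) volume := by
      apply Measure.integrableOn_of_bounded (M := 1) measure_ball_lt_top.ne
        hkermeas.aestronglyMeasurable
      filter_upwards [ae_restrict_mem measurableSet_ball] with y hy
      rw [Real.norm_eq_abs, abs_of_nonneg (Real.rpow_nonneg (norm_nonneg _) _)]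
      exact Real.rpow_le_one_of_one_le_of_nonpos (hdist y hy).1 hαn'
    have hgx : g x = ∫ y in ball c 1, ‖x - y‖ ^ (α - (n:ℝ)) := by
      rw [hg_def, rieszPotential]
      have : ∀ y : EuclideanSpace ℝ (Fin n), f y * ‖x - y‖ ^ (α - (n:ℝ))
          = (ball c 1).indicator (fun y => ‖x - y‖ ^ (α - (n:ℝ))) y := by
        intro y
        by_cases hy : y ∈ ball c 1
        · simp [hf_def, Set.indicator_of_mem hy]
        · simp [hf_def, Set.indicator_of_notMem hy]
      rw [integral_congr_ae (Filter.Eventually.of_forall this),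
        integral_indicator measurableSet_ball]
    have hlow : δ ≤ g x := by
      rw [hgx]
      have h1 : ∫ y in ball c 1, (5:ℝ) ^ (α - (n:ℝ)) ∂volume
          ≤ ∫ y in ball c 1, ‖x - y‖ ^ (α - (n:ℝ)) ∂volume := by
        apply setIntegral_mono_on (integrableOn_const measure_ball_lt_top.ne) hkint
          measurableSet_ball
        intro y hy
        exact Real.rpow_le_rpow_of_nonpos (lt_of_lt_of_le one_pos (hdist y hy).1)
          (hdist y hy).2 hαn'
      have h2 : ∫ y in ball c 1, (5:ℝ) ^ (α - (n:ℝ)) ∂(volume : Measure (EuclideanSpace ℝ (Fin n))) = δ := by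
        rw [setIntegral_const, measureReal_def, hball1 c, hδ_def, smul_eq_mul,
          ENNReal.toReal_ofReal hv.le, mul_comm]
      linarith
    exact le_trans hlow (le_abs_self _)
  -- Orlicz norm lower bound
  have horl : ENNReal.ofReal e₀ ≤ orliczNorm n Ψ g := by
    refine le_sInf fun b hb => ?_
    obtain ⟨e, he, rfl, hint⟩ := hb
    refine ENNReal.ofReal_le_ofReal ?_
    by_contra hlt
    push_neg at hlt
    -- e < e₀
    have key : ENNReal.ofReal (Ψ (δ/e)) * volume (ball c' 1)
        ≤ (1 : ℝ≥0∞) := by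
      refine le_trans ?_ hint
      calc ENNReal.ofReal (Ψ (δ/e)) * volume (ball c' 1)
          = ∫⁻ _x in ball c' 1, ENNReal.ofReal (Ψ (δ/e)) := by rw [setLIntegral_const]
        _ ≤ ∫⁻ x in ball c' 1, ENNReal.ofReal (Ψ (|g x| / e)) := by
            refine setLIntegral_mono' measurableSet_ball fun x hx => ?_
            have h1 : δ / e ≤ |g x| / e := by gcongr; exact hglow x hx
            exact ENNReal.ofReal_le_ofReal
              ((hΨ.strictMono.monotoneOn) (Set.mem_Ici.2 (by positivity))
                (Set.mem_Ici.2 (le_trans (by positivity) h1)) h1)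
        _ ≤ _ := setLIntegral_le_lintegral _ _
    rw [hball1 c', ← ENNReal.ofReal_mul (hΨ.nonneg (by positivity))] at key
    have hΨv : Ψ (δ/e) * v ≤ 1 := by
      have := ENNReal.ofReal_le_one.1 key
      exact this
    have hΨle : Ψ (δ/e) ≤ v⁻¹ := by
      rw [inv_eq_one_div]
      exact (le_div_iff₀ hv).2 hΨv
    have hMlt : M < δ / e := by
      rw [he₀_def] at hlt
      calc M = δ / (δ / M) := by field_simp
        _ < δ / e := by
            apply div_lt_div_of_pos_left hδ he
            exact hlt
    have : Ψ M < Ψ (δ/e) :=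
      hΨ.strictMono (Set.mem_Ici.2 hM0.le) (Set.mem_Ici.2 (by positivity)) hMlt
    have : v⁻¹ < v⁻¹ := lt_of_lt_of_le (lt_trans hMΨ this) hΨle
    exact lt_irrefl _ this
  -- conclusion
  have hfinal := hbound f hmem
  have h2 : orliczNorm n Ψ g ≤ ENNReal.ofReal C * ENNReal.ofReal e₁ :=
    le_trans hfinal (mul_le_mul_right hcent _)
  rw [← ENNReal.ofReal_mul hC.le] at h2
  have h3 : C * e₁ ≤ e₀ / 2 := by
    have h4 : e₁ ≤ e₀ / (2*C) := min_le_left _ _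
    have h5 : C * e₁ ≤ C * (e₀ / (2*C)) := mul_le_mul_of_nonneg_left h4 hC.le
    have h6 : C * (e₀ / (2*C)) = e₀ / 2 := by field_simp
    linarith
  have h7 : ENNReal.ofReal e₀ ≤ ENNReal.ofReal (e₀ / 2) :=
    le_trans horl (le_trans h2 (ENNReal.ofReal_le_ofReal h3))
  have h8 : e₀ ≤ e₀ / 2 := (ENNReal.ofReal_le_ofReal_iff (by positivity)).1 h7
  linarith
end
end

section
/- Let Φ be an Orlicz function and λ ∈ ℝ. The central Morrey–Orlicz space M^{Φ,λ}(0) contains a function that is not almost everywhere zero if and only if λ ≥ 0. -/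
open MeasureTheory ENNReal

noncomputable section

lemma aux_vol_ball (n : ℕ) (hn : 0 < n) {r : ℝ} (hr : 0 ≤ r) :
    (volume (Metric.ball (0 : EuclideanSpace ℝ (Fin n)) r)).toReal
      = r ^ n * (volume (Metric.ball (0 : EuclideanSpace ℝ (Fin n)) 1)).toReal := by
  haveI : Nonempty (Fin n) := ⟨⟨0, hn⟩⟩
  rw [Measure.addHaar_ball (μ := volume) (0 : EuclideanSpace ℝ (Fin n)) hr,
    finrank_euclideanSpace_fin, ENNReal.toReal_mul, ENNReal.toReal_ofReal (pow_nonneg hr n)]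

lemma aux_orlicz_small {Φ : ℝ → ℝ} (hΦ : IsOrliczFunction Φ) {δ : ℝ} (hδ : 0 < δ) :
    ∃ e : ℝ, 0 < e ∧ Φ (1 / e) ≤ δ := by
  have hc : ContinuousWithinAt Φ (Set.Ici 0) 0 := hΦ.continuous 0 Set.self_mem_Ici
  have ht : Filter.Tendsto Φ (nhdsWithin 0 (Set.Ici 0)) (nhds 0) := by
    have := hc.tendsto; rwa [hΦ.zero] at this
  have h2 : ∀ᶠ u in nhdsWithin (0:ℝ) (Set.Ici 0), Φ u < δ := ht.eventually_lt_const hδ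
  have h3 := h2.filter_mono (nhdsWithin_mono _ Set.Ioi_subset_Ici_self)
  obtain ⟨u, hu1, hu2⟩ := (h3.and eventually_mem_nhdsWithin).exists
  have hu0 : (0:ℝ) < u := hu2
  refine ⟨1 / u, by positivity, ?_⟩
  rw [one_div_one_div]
  exact hu1.le

lemma aux_phi_nonneg {Φ : ℝ → ℝ} (hΦ : IsOrliczFunction Φ) {u : ℝ} (hu : 0 ≤ u) : 0 ≤ Φ u := by
  have := hΦ.strictMono.monotoneOn Set.self_mem_Ici (Set.mem_Ici.mpr hu) hu
  rwa [hΦ.zero] at this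

/-- the central Morrey–Orlicz space M^{Φ,λ}(0) contains a function
which is not a.e. zero if and only if λ ≥ 0. -/
theorem statement15 (n : ℕ) (hn : 0 < n) (Φ : ℝ → ℝ) (hΦ : IsOrliczFunction Φ)
    (lam : ℝ) :
    (∃ f : EuclideanSpace ℝ (Fin n) → ℝ,
        MemCentralMorreyOrlicz n Φ lam f ∧ ¬ (f =ᵐ[volume] fun _ => (0 : ℝ)))
      ↔ 0 ≤ lam := by
  haveI : Nonempty (Fin n) := ⟨⟨0, hn⟩⟩
  have hv1pos : 0 < (volume (Metric.ball (0 : EuclideanSpace ℝ (Fin n)) 1)).toReal :=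
    ENNReal.toReal_pos (Metric.measure_ball_pos volume 0 one_pos).ne' measure_ball_lt_top.ne
  set v1 := (volume (Metric.ball (0 : EuclideanSpace ℝ (Fin n)) 1)).toReal with hv1def
  constructor
  · rintro ⟨f, ⟨hloc, hnorm⟩, hne⟩
    by_contra hlam
    push_neg at hlam
    have hsm := hloc.aestronglyMeasurable
    set g := hsm.mk f with hgdef
    have hfg : f =ᵐ[volume] g := hsm.ae_eq_mk
    have hgm : Measurable g := hsm.stronglyMeasurable_mk.measurable
    -- find a set of positive measure where |g| is bounded below
    have hexists : ∃ k : ℕ, volume ({x | 1/((k:ℝ)+1) ≤ |g x|} ∩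
        Metric.ball (0 : EuclideanSpace ℝ (Fin n)) ((k:ℝ)+1)) ≠ 0 := by
      by_contra h
      push_neg at h
      apply hne
      refine hfg.trans ?_
      have hsub : {x : EuclideanSpace ℝ (Fin n) | g x ≠ 0} ⊆
          ⋃ k : ℕ, ({x | 1/((k:ℝ)+1) ≤ |g x|} ∩
            Metric.ball (0 : EuclideanSpace ℝ (Fin n)) ((k:ℝ)+1)) := by
        intro x hx
        have h1 : 0 < |g x| := abs_pos.mpr hx
        obtain ⟨k, hk⟩ := exists_nat_gt (max (1/|g x|) ‖x‖)
        refine Set.mem_iUnion.mpr ⟨k, ?_, ?_⟩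
        · have h2 : 1/|g x| ≤ (k:ℝ)+1 :=
            le_of_lt (((le_max_left _ _).trans_lt hk).trans (lt_add_one _))
          exact (one_div_le (by positivity) h1).mpr h2
        · have h3 : ‖x‖ < (k:ℝ)+1 := ((le_max_right _ _).trans_lt hk).trans (lt_add_one _)
          simpa [Metric.mem_ball, dist_zero_right] using h3
      have h0 : volume {x : EuclideanSpace ℝ (Fin n) | g x ≠ 0} = 0 :=
        measure_mono_null hsub (measure_iUnion_null fun k => h k)
      exact (MeasureTheory.ae_iff).mpr h0
    obtain ⟨k, hk⟩ := hexists
    set c : ℝ := 1/((k:ℝ)+1) with hcdef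
    have hcpos : 0 < c := by positivity
    set A := {x | c ≤ |g x|} ∩ Metric.ball (0 : EuclideanSpace ℝ (Fin n)) ((k:ℝ)+1) with hAdef
    have hAm : MeasurableSet A :=
      (measurableSet_le measurable_const hgm.abs).inter measurableSet_ball
    have hApos : 0 < volume A := lt_of_le_of_ne (zero_le) (Ne.symm hk)
    have hAfin : volume A < ⊤ :=
      lt_of_le_of_lt (measure_mono Set.inter_subset_right) measure_ball_lt_top
    -- key claim: the central norm is above any M
    have key : ∀ M : ℝ, 0 < M →
        ENNReal.ofReal M ≤ centralNorm n (fun u => ENNReal.ofReal (Φ u)) lam f := by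
      intro M hM
      have hcM : 0 < c / M := div_pos hcpos hM
      have hΦc : 0 < Φ (c / M) := by
        have := hΦ.strictMono Set.self_mem_Ici (Set.mem_Ici.mpr hcM.le) hcM
        rwa [hΦ.zero] at this
      set η : ℝ≥0∞ := ENNReal.ofReal (Φ (c / M)) * volume A with hηdef
      have hηpos : 0 < η :=
        ENNReal.mul_pos (by simp [ENNReal.ofReal_pos.mpr hΦc, (ENNReal.ofReal_pos.mpr hΦc).ne'])
          hApos.ne'
      have hηfin : η < ⊤ := ENNReal.mul_lt_top ENNReal.ofReal_lt_top hAfin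
      set ε := η.toReal with hεdef
      have hεpos : 0 < ε := ENNReal.toReal_pos hηpos.ne' hηfin.ne
      set T := (ε/2) ^ (1/lam) with hTdef
      have hTpos : 0 < T := Real.rpow_pos_of_pos (by linarith) _
      set r := max ((k:ℝ)+1) (max 1 (T / v1)) with hrdef
      have hr1 : 1 ≤ r := le_max_of_le_right (le_max_left _ _)
      have hr0 : 0 < r := lt_of_lt_of_le one_pos hr1
      have hvol : (volume (Metric.ball (0 : EuclideanSpace ℝ (Fin n)) r)).toReal ^ lam ≤ ε/2 := by
        have hTr : T / v1 ≤ r := le_max_of_le_right (le_max_right _ _)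
        have h2 : r ≤ r ^ n := le_self_pow₀ hr1 hn.ne'
        have h1 : T ≤ r ^ n * v1 := by
          have : T = (T / v1) * v1 := by field_simp
          rw [this]
          have : (T / v1) * v1 ≤ r * v1 := by nlinarith
          nlinarith
        rw [aux_vol_ball n hn hr0.le, ← hv1def]
        calc (r ^ n * v1) ^ lam ≤ T ^ lam :=
              Real.rpow_le_rpow_of_nonpos hTpos h1 hlam.le
          _ = ε/2 := by
              rw [hTdef, ← Real.rpow_mul (by linarith), one_div_mul_cancel hlam.ne,
                Real.rpow_one]
      -- lower bound on the Luxemburg functional at radius r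
      have hlb : ENNReal.ofReal M ≤ luxNorm n (fun u => ENNReal.ofReal (Φ u)) lam r f := by
        apply le_sInf
        rintro ε' ⟨e, he, rfl, hint⟩
        rw [ENNReal.ofReal_le_ofReal_iff he.le]
        by_contra hMe
        push_neg at hMe
        have hAsub : A ⊆ Metric.ball (0 : EuclideanSpace ℝ (Fin n)) r :=
          Set.inter_subset_right.trans (Metric.ball_subset_ball (le_max_left _ _))
        have hmono : η ≤ ∫⁻ x in Metric.ball (0 : EuclideanSpace ℝ (Fin n)) r,
            ENNReal.ofReal (Φ (|f x| / e)) := by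
          have e1 : ∫⁻ x in Metric.ball (0 : EuclideanSpace ℝ (Fin n)) r,
              ENNReal.ofReal (Φ (|f x| / e))
              = ∫⁻ x in Metric.ball (0 : EuclideanSpace ℝ (Fin n)) r,
                ENNReal.ofReal (Φ (|g x| / e)) :=
            lintegral_congr_ae (ae_restrict_of_ae (hfg.mono fun x hx => by simp only [hx]))
          rw [e1, hηdef]
          calc ENNReal.ofReal (Φ (c/M)) * volume A
              = ∫⁻ _ in A, ENNReal.ofReal (Φ (c/M)) ∂volume := (setLIntegral_const A _).symm
            _ ≤ ∫⁻ x in A, ENNReal.ofReal (Φ (|g x| / e)) ∂volume := by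
                apply setLIntegral_mono' hAm
                intro x hx
                apply ENNReal.ofReal_le_ofReal
                have hge : 0 ≤ |g x| / e := div_nonneg (abs_nonneg _) he.le
                apply hΦ.strictMono.monotoneOn (Set.mem_Ici.mpr hcM.le) (Set.mem_Ici.mpr hge)
                calc c / M ≤ c / e := (div_le_div_iff_of_pos_left hcpos hM he).mpr hMe.le
                  _ ≤ |g x| / e := (div_le_div_iff_of_pos_right he).mpr hx.1
            _ ≤ _ := lintegral_mono_set hAsub
        have hlt : ENNReal.ofReal
            ((volume (Metric.ball (0 : EuclideanSpace ℝ (Fin n)) r)).toReal ^ lam) < η := by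
          calc ENNReal.ofReal ((volume (Metric.ball (0 : EuclideanSpace ℝ (Fin n)) r)).toReal ^ lam)
              ≤ ENNReal.ofReal (ε/2) := ENNReal.ofReal_le_ofReal hvol
            _ < ENNReal.ofReal ε := by
                rw [ENNReal.ofReal_lt_ofReal_iff hεpos]; linarith
            _ = η := ENNReal.ofReal_toReal hηfin.ne
        exact absurd (hmono.trans hint) (not_le.mpr hlt)
      calc ENNReal.ofReal M ≤ luxNorm n (fun u => ENNReal.ofReal (Φ u)) lam r f := hlb
        _ ≤ centralNorm n (fun u => ENNReal.ofReal (Φ u)) lam f :=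
            le_iSup (fun p : {r : ℝ // 0 < r} =>
              luxNorm n (fun u => ENNReal.ofReal (Φ u)) lam p.1 f) ⟨r, hr0⟩
    set C := centralNorm n (fun u => ENNReal.ofReal (Φ u)) lam f with hCdef
    have hM := key (C.toReal + 1) (by positivity)
    have hlt2 : C < ENNReal.ofReal (C.toReal + 1) :=
      (ENNReal.lt_ofReal_iff_toReal_lt hnorm.ne).mpr (lt_add_one _)
    exact absurd hM (not_le.mpr hlt2)
  · intro hlam
    set A := Metric.ball (0 : EuclideanSpace ℝ (Fin n)) 2 \
        Metric.ball (0 : EuclideanSpace ℝ (Fin n)) 1 with hAdef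
    have hAm : MeasurableSet A := measurableSet_ball.diff measurableSet_ball
    have hAfin : volume A < ⊤ :=
      lt_of_le_of_lt (measure_mono Set.diff_subset) measure_ball_lt_top
    have hApos : 0 < volume A := by
      have hsub : Metric.ball (0 : EuclideanSpace ℝ (Fin n)) 1 ⊆
          Metric.ball (0 : EuclideanSpace ℝ (Fin n)) 2 :=
        Metric.ball_subset_ball (by norm_num)
      rw [hAdef, measure_diff hsub measurableSet_ball.nullMeasurableSet measure_ball_lt_top.ne]
      rw [tsub_pos_iff_lt]
      have h2 : volume (Metric.ball (0 : EuclideanSpace ℝ (Fin n)) 2)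
          = ENNReal.ofReal (2 ^ n) * volume (Metric.ball (0 : EuclideanSpace ℝ (Fin n)) 1) := by
        rw [Measure.addHaar_ball (μ := volume) (0 : EuclideanSpace ℝ (Fin n)) (by norm_num : (0:ℝ) ≤ 2),
          finrank_euclideanSpace_fin]
      rw [h2]
      have h3 : (2 : ℝ≥0∞) ≤ ENNReal.ofReal (2 ^ n) := by
        have : (2:ℝ) ≤ 2 ^ n := le_self_pow₀ one_le_two hn.ne'
        calc (2 : ℝ≥0∞) = ENNReal.ofReal 2 := by norm_num
          _ ≤ ENNReal.ofReal (2 ^ n) := ENNReal.ofReal_le_ofReal this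
      calc volume (Metric.ball (0 : EuclideanSpace ℝ (Fin n)) 1)
          < 2 * volume (Metric.ball (0 : EuclideanSpace ℝ (Fin n)) 1) := by
            rw [two_mul]
            exact ENNReal.lt_add_right measure_ball_lt_top.ne
              (Metric.measure_ball_pos volume 0 one_pos).ne'
        _ ≤ ENNReal.ofReal (2 ^ n) * volume (Metric.ball (0 : EuclideanSpace ℝ (Fin n)) 1) :=
            mul_le_mul_left h3 _
    set f : EuclideanSpace ℝ (Fin n) → ℝ := A.indicator (fun _ => 1) with hfdef
    have hv2pos : 0 < (volume (Metric.ball (0 : EuclideanSpace ℝ (Fin n)) 2)).toReal :=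
      ENNReal.toReal_pos (Metric.measure_ball_pos volume 0 two_pos).ne' measure_ball_lt_top.ne
    set v2 := (volume (Metric.ball (0 : EuclideanSpace ℝ (Fin n)) 2)).toReal with hv2def
    obtain ⟨e₀, he₀, hΦe₀⟩ := aux_orlicz_small hΦ (show 0 < v1 ^ lam / v2 by positivity)
    have hΦe₀0 : 0 ≤ Φ (1 / e₀) := aux_phi_nonneg hΦ (by positivity)
    refine ⟨f, ⟨?_, ?_⟩, ?_⟩
    · exact ((integrable_indicator_iff hAm).mpr
        ((integrableOn_const_iff).mpr (Or.inr hAfin))).locallyIntegrable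
    · -- central norm finite
      have hbound : centralNorm n (fun u => ENNReal.ofReal (Φ u)) lam f ≤ ENNReal.ofReal e₀ := by
        apply iSup_le
        rintro ⟨r, hr⟩
        apply sInf_le
        refine ⟨e₀, he₀, rfl, ?_⟩
        have hpt : ∀ x, ENNReal.ofReal (Φ (|f x| / e₀))
            = A.indicator (fun _ => ENNReal.ofReal (Φ (1/e₀))) x := by
          intro x
          by_cases hx : x ∈ A
          · simp [hfdef, Set.indicator_of_mem hx]
          · simp [hfdef, Set.indicator_of_notMem hx, hΦ.zero]
        have hcalc : ∫⁻ x in Metric.ball (0 : EuclideanSpace ℝ (Fin n)) r,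
            ENNReal.ofReal (Φ (|f x| / e₀))
            = ENNReal.ofReal (Φ (1/e₀)) *
              volume (A ∩ Metric.ball (0 : EuclideanSpace ℝ (Fin n)) r) := by
          rw [lintegral_congr fun x => hpt x, lintegral_indicator hAm, setLIntegral_const,
            Measure.restrict_apply hAm]
        rw [hcalc]
        by_cases hr1 : r ≤ 1
        · have hempty : A ∩ Metric.ball (0 : EuclideanSpace ℝ (Fin n)) r = ∅ := by
            ext x
            simp only [Set.mem_inter_iff, Set.mem_empty_iff_false, iff_false, not_and,
              hAdef, Set.mem_diff]
            rintro ⟨_, hx1⟩ hx2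
            rw [Metric.mem_ball, dist_zero_right] at hx1 hx2
            exact hx1 (hx2.trans_le hr1)
          rw [hempty]
          simp
        · push_neg at hr1
          have hmle : volume (A ∩ Metric.ball (0 : EuclideanSpace ℝ (Fin n)) r)
              ≤ volume (Metric.ball (0 : EuclideanSpace ℝ (Fin n)) 2) :=
            measure_mono (Set.inter_subset_left.trans Set.diff_subset)
          calc ENNReal.ofReal (Φ (1/e₀)) *
                volume (A ∩ Metric.ball (0 : EuclideanSpace ℝ (Fin n)) r)
              ≤ ENNReal.ofReal (Φ (1/e₀)) * ENNReal.ofReal v2 := by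
                rw [hv2def, ENNReal.ofReal_toReal measure_ball_lt_top.ne]
                exact mul_le_mul_right hmle _
            _ = ENNReal.ofReal (Φ (1/e₀) * v2) := (ENNReal.ofReal_mul hΦe₀0).symm
            _ ≤ ENNReal.ofReal (v1 ^ lam) := by
                apply ENNReal.ofReal_le_ofReal
                calc Φ (1/e₀) * v2 ≤ (v1 ^ lam / v2) * v2 := by nlinarith
                  _ = v1 ^ lam := div_mul_cancel₀ _ hv2pos.ne'
            _ ≤ ENNReal.ofReal
                ((volume (Metric.ball (0 : EuclideanSpace ℝ (Fin n)) r)).toReal ^ lam) := by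
                apply ENNReal.ofReal_le_ofReal
                apply Real.rpow_le_rpow hv1pos.le _ hlam
                rw [hv1def]
                apply ENNReal.toReal_le_toReal measure_ball_lt_top.ne measure_ball_lt_top.ne
                  |>.mpr
                exact measure_mono (Metric.ball_subset_ball hr1.le)
      exact lt_of_le_of_lt hbound ENNReal.ofReal_lt_top
    · intro h
      have h0 : volume {x : EuclideanSpace ℝ (Fin n) | f x ≠ 0} = 0 := by
        have := (MeasureTheory.ae_iff).mp h
        simpa using this
      have hsub : A ⊆ {x : EuclideanSpace ℝ (Fin n) | f x ≠ 0} := by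
        intro x hx
        have hfx : f x = 1 := Set.indicator_of_mem hx _
        simp [hfx]
      exact absurd (measure_mono_null hsub h0) hApos.ne'
end
end

section
/- Let Φ and Ψ be Orlicz functions and 0 ≤ λ, μ < 1. Assume there exist constants A_1, A_2 > 0 such that (i) Φ(u/A_1) ≤ Ψ(u)^{(λ−1)/(μ−1)} for all u > 0, and (ii) Φ(u/A_2) ≤ Ψ(u) r^{λ−μ} for all u, r > 0 satisfying Ψ^{-1}(r^{μ−1}) < u. Then M^{Ψ,μ}(0) embeds into M^{Φ,λ}(0); more precisely, ‖f‖_{M^{Φ,λ}(0)} ≤ 2 max(A_1, A_2) ‖f‖_{M^{Ψ,μ}(0)} for every f ∈ M^{Ψ,μ}(0). -/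
open MeasureTheory ENNReal

noncomputable section

/-- sufficiency of conditions (i) and (ii) for the embedding
M^{Ψ,μ}(0) ↪ M^{Φ,λ}(0), with constant 2 max(A₁, A₂). -/
theorem statement16 (n : ℕ) (Φ Ψ Ψinv : ℝ → ℝ)
    (hΦ : IsOrliczFunction Φ) (hΨ : IsOrliczFunction Ψ) (hΨinv : IsOrliczInverse Ψ Ψinv)
    (lam μ : ℝ) (hlam0 : 0 ≤ lam) (hlam1 : lam < 1) (hμ0 : 0 ≤ μ) (hμ1 : μ < 1)
    (A₁ A₂ : ℝ) (hA₁ : 0 < A₁) (hA₂ : 0 < A₂)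
    (hi : ∀ u : ℝ, 0 < u → Φ (u / A₁) ≤ Ψ u ^ ((lam - 1) / (μ - 1)))
    (hii : ∀ u r : ℝ, 0 < u → 0 < r → Ψinv (r ^ (μ - 1)) < u →
      Φ (u / A₂) ≤ Ψ u * r ^ (lam - μ)) :
    ∀ f : EuclideanSpace ℝ (Fin n) → ℝ, MemCentralMorreyOrlicz n Ψ μ f →
      centralNorm n (fun u => ENNReal.ofReal (Φ u)) lam f
        ≤ ENNReal.ofReal (2 * max A₁ A₂)
            * centralNorm n (fun u => ENNReal.ofReal (Ψ u)) μ f := by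

  intro f hf
  set M := max A₁ A₂ with hMdef
  have hM0 : 0 < M := lt_max_of_lt_left hA₁
  have hA₁M : A₁ ≤ M := le_max_left _ _
  have hA₂M : A₂ ≤ M := le_max_right _ _
  have hΦmono : MonotoneOn Φ (Set.Ici 0) := hΦ.strictMono.monotoneOn
  have hΨmono : MonotoneOn Ψ (Set.Ici 0) := hΨ.strictMono.monotoneOn
  have hΦnn : ∀ u : ℝ, 0 ≤ u → 0 ≤ Φ u := fun u hu => by
    rw [← hΦ.zero]
    exact hΦmono Set.self_mem_Ici (Set.mem_Ici.mpr hu) hu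
  have hΨnn : ∀ u : ℝ, 0 ≤ u → 0 ≤ Ψ u := fun u hu => by
    rw [← hΨ.zero]
    exact hΨmono Set.self_mem_Ici (Set.mem_Ici.mpr hu) hu
  have hΦdiv : ∀ u a b : ℝ, 0 ≤ u → 0 < a → a ≤ b → Φ (u / b) ≤ Φ (u / a) := by
    intro u a b hu ha hab
    have hb : 0 < b := lt_of_lt_of_le ha hab
    exact hΦmono (Set.mem_Ici.mpr (by positivity)) (Set.mem_Ici.mpr (by positivity)) (by gcongr)
  have half : ∀ u : ℝ, 0 ≤ u → Φ (u / 2) ≤ Φ u / 2 := by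
    intro u hu
    have h := hΦ.convex.2 (Set.mem_Ici.mpr hu) Set.self_mem_Ici
      (by norm_num : (0:ℝ) ≤ 1/2) (by norm_num : (0:ℝ) ≤ 1/2) (by norm_num : (1:ℝ)/2 + 1/2 = 1)
    have e1 : (1/2 : ℝ) • u + (1/2 : ℝ) • (0:ℝ) = u / 2 := by
      rw [smul_eq_mul, smul_eq_mul]; ring
    have e2 : (1/2 : ℝ) • Φ u + (1/2 : ℝ) • Φ 0 = Φ u / 2 := by
      rw [smul_eq_mul, smul_eq_mul, hΦ.zero]; ring
    rw [e1, e2] at h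
    exact h
  set θ : ℝ := (lam - 1) / (μ - 1) with hθdef
  have hμ1' : μ - 1 < 0 := by linarith
  have hθpos : 0 < θ := div_pos_iff.mpr (Or.inr ⟨by linarith, hμ1'⟩)
  have hne : μ - 1 ≠ 0 := hμ1'.ne
  refine iSup_le ?_
  rintro ⟨r, hr⟩
  set B := Metric.ball (0 : EuclideanSpace ℝ (Fin n)) r with hBdef
  have hvpos0 : 0 < volume B := Metric.measure_ball_pos _ _ hr
  have hvne : volume B ≠ ⊤ := measure_ball_lt_top.ne
  set v := (volume B).toReal with hvdef
  have hv : 0 < v := ENNReal.toReal_pos hvpos0.ne' hvne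
  have hofv : ENNReal.ofReal v = volume B := ENNReal.ofReal_toReal hvne
  have hfae : AEMeasurable f (volume.restrict B) :=
    hf.1.aestronglyMeasurable.aemeasurable.restrict
  have key : ∀ e : ℝ, 0 < e →
      (∫⁻ x in B, ENNReal.ofReal (Ψ (|f x| / e))) ≤ ENNReal.ofReal (v ^ μ) →
      (∫⁻ x in B, ENNReal.ofReal (Φ (|f x| / (2 * M * e)))) ≤ ENNReal.ofReal (v ^ lam) := by
    intro e he hint
    set G : EuclideanSpace ℝ (Fin n) → ℝ≥0∞ := fun x => ENNReal.ofReal (Ψ (|f x| / e))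
      with hGdef
    have hGmeas : AEMeasurable G (volume.restrict B) := by
      have hcont : Continuous fun y : ℝ => ENNReal.ofReal (Ψ (max y 0)) := by
        apply ENNReal.continuous_ofReal.comp
        exact hΨ.continuous.comp_continuous (continuous_id.max continuous_const)
          (fun y => Set.mem_Ici.mpr (le_max_right _ _))
      have hG2 : G = fun x => ENNReal.ofReal (Ψ (max (|f x| / e) 0)) := by
        funext x; rw [max_eq_left (by positivity)]
      rw [hG2]
      exact hcont.measurable.comp_aemeasurable ((continuous_abs.measurable.comp_aemeasurable hfae).div_const e)
    have hrw : ∀ x : EuclideanSpace ℝ (Fin n), |f x| / (2 * M * e) = (|f x| / e) / (2 * M) := by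
      intro x; rw [div_div]; congr 1; ring
    -- pointwise small bound
    have hsmall : ∀ u : ℝ, 0 ≤ u → Φ (u / M) ≤ Ψ u ^ θ := by
      intro u hu
      rcases eq_or_lt_of_le hu with h0 | h0
      · rw [← h0]
        rw [zero_div, hΦ.zero, hΨ.zero, Real.zero_rpow hθpos.ne']
      · exact le_trans (hΦdiv u A₁ M h0.le hA₁ hA₁M) (hi u h0)
    -- pointwise large bound
    have hlarge : ∀ u : ℝ, 0 ≤ u → v ^ (μ - 1) < Ψ u → Φ (u / M) ≤ Ψ u * v ^ (lam - μ) := by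
      intro u hu hΨu
      have hru : 0 ≤ v ^ (μ - 1) := Real.rpow_nonneg hv.le _
      have hu0 : 0 < u := by
        rcases eq_or_lt_of_le hu with h0 | h0
        · exfalso; rw [← h0, hΨ.zero] at hΨu; linarith
        · exact h0
      have hinv0 : 0 ≤ Ψinv (v ^ (μ - 1)) := (hΨinv.2 _ hru).1
      have hinveq : Ψ (Ψinv (v ^ (μ - 1))) = v ^ (μ - 1) := (hΨinv.2 _ hru).2
      have ht : Ψinv (v ^ (μ - 1)) < u := by
        by_contra hle
        push_neg at hle
        have := hΨmono (Set.mem_Ici.mpr hu0.le) (Set.mem_Ici.mpr hinv0) hle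
        rw [hinveq] at this
        linarith
      exact le_trans (hΦdiv u A₂ M hu hA₂ hA₂M) (hii u v hu0 hv ht)
    rcases le_or_gt lam μ with hcase | hcase
    · -- pointwise bound by G x * ofReal (v ^ (lam - μ))
      have hθ1 : 1 ≤ θ := by
        rw [hθdef, le_div_iff_of_neg hμ1']; linarith
      have hsp : ∀ u : ℝ, 0 ≤ u → Ψ u ≤ v ^ (μ - 1) → Ψ u ^ θ ≤ Ψ u * v ^ (lam - μ) := by
        intro u hu hb
        rcases eq_or_lt_of_le (hΨnn u hu) with h0 | h0
        · rw [← h0, Real.zero_rpow hθpos.ne', zero_mul]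
        · have hesplit : Ψ u ^ θ = Ψ u * Ψ u ^ (θ - 1) := by
            have h := Real.rpow_add h0 1 (θ - 1)
            rw [Real.rpow_one, show (1 : ℝ) + (θ - 1) = θ by ring] at h
            exact h
          rw [hesplit]
          have h1 : Ψ u ^ (θ - 1) ≤ (v ^ (μ - 1)) ^ (θ - 1) :=
            Real.rpow_le_rpow h0.le hb (by linarith)
          have h2 : (v ^ (μ - 1)) ^ (θ - 1) = v ^ (lam - μ) := by
            rw [← Real.rpow_mul hv.le]
            congr 1
            rw [hθdef]
            field_simp [hne]
            try ring
          rw [h2] at h1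
          exact mul_le_mul_of_nonneg_left h1 h0.le
      have hpt : ∀ x, ENNReal.ofReal (Φ (|f x| / (2 * M * e)))
          ≤ G x * ENNReal.ofReal (v ^ (lam - μ)) := by
        intro x
        set u := |f x| / e with hudef
        have hu0 : (0:ℝ) ≤ u := by positivity
        rw [hrw x]
        have key2 : Φ (u / (2 * M)) ≤ Ψ u * v ^ (lam - μ) := by
          have hm : Φ (u / (2 * M)) ≤ Φ (u / M) := hΦdiv u M (2*M) hu0 hM0 (by linarith)
          rcases le_or_gt (Ψ u) (v ^ (μ - 1)) with hs | hl
          · exact le_trans hm (le_trans (hsmall u hu0) (hsp u hu0 hs))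
          · exact le_trans hm (hlarge u hu0 hl)
        calc ENNReal.ofReal (Φ (u / (2 * M)))
            ≤ ENNReal.ofReal (Ψ u * v ^ (lam - μ)) := ENNReal.ofReal_le_ofReal key2
          _ = G x * ENNReal.ofReal (v ^ (lam - μ)) := by
              rw [ENNReal.ofReal_mul (hΨnn u hu0)]
      calc (∫⁻ x in B, ENNReal.ofReal (Φ (|f x| / (2 * M * e))))
          ≤ ∫⁻ x in B, G x * ENNReal.ofReal (v ^ (lam - μ)) := lintegral_mono hpt
        _ = (∫⁻ x in B, G x) * ENNReal.ofReal (v ^ (lam - μ)) :=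
            lintegral_mul_const' _ _ ENNReal.ofReal_ne_top
        _ ≤ ENNReal.ofReal (v ^ μ) * ENNReal.ofReal (v ^ (lam - μ)) :=
            mul_le_mul_left hint _
        _ = ENNReal.ofReal (v ^ lam) := by
            rw [← ENNReal.ofReal_mul (Real.rpow_nonneg hv.le _), ← Real.rpow_add hv,
              show μ + (lam - μ) = lam by ring]
    · -- Hoelder case
      have hθ1 : θ < 1 := by
        rw [hθdef, div_lt_iff_of_neg hμ1']; linarith
      set c := ENNReal.ofReal (v ^ (lam - μ)) with hcdef
      have hpt : ∀ x, ENNReal.ofReal (Φ (|f x| / (2 * M * e)))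
          ≤ 2⁻¹ * (G x ^ θ + G x * c) := by
        intro x
        set u := |f x| / e with hudef
        have hu0 : (0:ℝ) ≤ u := by positivity
        rw [hrw x]
        have h2 : Φ (u / (2 * M)) ≤ Φ (u / M) / 2 := by
          have hre : u / (2 * M) = (u / M) / 2 := by ring
          rw [hre]
          exact half (u / M) (by positivity)
        have hGx : G x = ENNReal.ofReal (Ψ u) := rfl
        rcases le_or_gt (Ψ u) (v ^ (μ - 1)) with hs | hl
        · have hb : Φ (u / (2 * M)) ≤ Ψ u ^ θ / 2 := by
            have := hsmall u hu0
            linarith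
          calc ENNReal.ofReal (Φ (u / (2 * M)))
              ≤ ENNReal.ofReal (Ψ u ^ θ / 2) := ENNReal.ofReal_le_ofReal hb
            _ = 2⁻¹ * ENNReal.ofReal (Ψ u ^ θ) := by
                rw [ENNReal.ofReal_div_of_pos (by norm_num : (0:ℝ) < 2), ENNReal.ofReal_ofNat,
                  ENNReal.div_eq_inv_mul]
            _ = 2⁻¹ * G x ^ θ := by
                rw [hGx, ENNReal.ofReal_rpow_of_nonneg (hΨnn u hu0) hθpos.le]
            _ ≤ 2⁻¹ * (G x ^ θ + G x * c) := mul_le_mul_right le_self_add _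
        · have hb : Φ (u / (2 * M)) ≤ Ψ u * v ^ (lam - μ) / 2 := by
            have := hlarge u hu0 hl
            linarith
          calc ENNReal.ofReal (Φ (u / (2 * M)))
              ≤ ENNReal.ofReal (Ψ u * v ^ (lam - μ) / 2) := ENNReal.ofReal_le_ofReal hb
            _ = 2⁻¹ * ENNReal.ofReal (Ψ u * v ^ (lam - μ)) := by
                rw [ENNReal.ofReal_div_of_pos (by norm_num : (0:ℝ) < 2), ENNReal.ofReal_ofNat,
                  ENNReal.div_eq_inv_mul]
            _ = 2⁻¹ * (G x * c) := by
                rw [hGx, hcdef, ENNReal.ofReal_mul (hΨnn u hu0)]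
            _ ≤ 2⁻¹ * (G x ^ θ + G x * c) := mul_le_mul_right le_add_self _
      have hGθ : (∫⁻ x in B, G x ^ θ) ≤ ENNReal.ofReal (v ^ lam) := by
        have hpq : Real.HolderConjugate (1/θ) (1/(1-θ)) := by
          refine Real.holderConjugate_iff.mpr ⟨?_, ?_⟩
          · exact (one_lt_one_div hθpos hθ1)
          · rw [one_div, one_div, inv_inv, inv_inv]; ring
        have H := ENNReal.lintegral_mul_le_Lp_mul_Lq (volume.restrict B) hpq
          (f := fun x => G x ^ θ) (g := fun _ => 1) (hGmeas.pow_const θ) aemeasurable_const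
        simp only [Pi.mul_apply, mul_one, ENNReal.one_rpow, lintegral_one,
          Measure.restrict_apply_univ, one_div_one_div] at H
        have hLHS : (∫⁻ x in B, (G x ^ θ) ^ (1/θ)) = ∫⁻ x in B, G x := by
          congr 1; funext x
          rw [← ENNReal.rpow_mul, mul_one_div_cancel hθpos.ne', ENNReal.rpow_one]
        rw [hLHS] at H
        refine le_trans H ?_
        have h1 : (∫⁻ x in B, G x) ^ θ ≤ ENNReal.ofReal (v ^ μ) ^ θ :=
          ENNReal.rpow_le_rpow hint hθpos.le
        have h2 : ENNReal.ofReal (v ^ μ) ^ θ = ENNReal.ofReal ((v ^ μ) ^ θ) :=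
          ENNReal.ofReal_rpow_of_nonneg (Real.rpow_nonneg hv.le _) hθpos.le
        have h3 : (volume B) ^ (1 - θ) = ENNReal.ofReal (v ^ (1 - θ)) := by
          rw [← hofv, ENNReal.ofReal_rpow_of_nonneg hv.le (by linarith)]
        calc (∫⁻ x in B, G x) ^ θ * (volume B) ^ (1 - θ)
            ≤ ENNReal.ofReal ((v ^ μ) ^ θ) * ENNReal.ofReal (v ^ (1 - θ)) := by
              rw [← h2, ← h3]
              exact mul_le_mul_left h1 _
          _ = ENNReal.ofReal (v ^ lam) := by
              rw [← ENNReal.ofReal_mul (Real.rpow_nonneg (Real.rpow_nonneg hv.le _) _)]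
              congr 1
              rw [← Real.rpow_mul hv.le, ← Real.rpow_add hv]
              congr 1
              rw [hθdef]
              field_simp [hne]
              try ring
      have hGc : (∫⁻ x in B, G x * c) ≤ ENNReal.ofReal (v ^ lam) := by
        calc (∫⁻ x in B, G x * c) = (∫⁻ x in B, G x) * c :=
            lintegral_mul_const' _ _ ENNReal.ofReal_ne_top
          _ ≤ ENNReal.ofReal (v ^ μ) * c := mul_le_mul_left hint _
          _ = ENNReal.ofReal (v ^ lam) := by
              rw [hcdef, ← ENNReal.ofReal_mul (Real.rpow_nonneg hv.le _), ← Real.rpow_add hv,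
                show μ + (lam - μ) = lam by ring]
      calc (∫⁻ x in B, ENNReal.ofReal (Φ (|f x| / (2 * M * e))))
          ≤ ∫⁻ x in B, 2⁻¹ * (G x ^ θ + G x * c) := lintegral_mono hpt
        _ = 2⁻¹ * ((∫⁻ x in B, G x ^ θ) + ∫⁻ x in B, G x * c) := by
            rw [lintegral_const_mul' _ _ (by norm_num),
              lintegral_add_left' (hGmeas.pow_const θ)]
        _ ≤ 2⁻¹ * (ENNReal.ofReal (v ^ lam) + ENNReal.ofReal (v ^ lam)) := by
            exact mul_le_mul_right (add_le_add hGθ hGc) _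
        _ = ENNReal.ofReal (v ^ lam) := by
            rw [← two_mul, ← mul_assoc, ENNReal.inv_mul_cancel two_ne_zero ENNReal.ofNat_ne_top,
              one_mul]
  -- wrap up: luxNorm bound
  have hLlt : luxNorm n (fun u => ENNReal.ofReal (Ψ u)) μ r f < ⊤ :=
    lt_of_le_of_lt
      (le_iSup (fun ρ : {ρ : ℝ // 0 < ρ} => luxNorm n (fun u => ENNReal.ofReal (Ψ u)) μ ρ.1 f)
        ⟨r, hr⟩) hf.2
  have hlux : luxNorm n (fun u => ENNReal.ofReal (Φ u)) lam r f
      ≤ ENNReal.ofReal (2 * M) * luxNorm n (fun u => ENNReal.ofReal (Ψ u)) μ r f := by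
    refine ENNReal.le_of_forall_pos_le_add fun ε hε hfin => ?_
    have hεR : (0:ℝ) < (ε:ℝ) := hε
    have hδ : (0:ℝ) < (ε:ℝ) / (2 * M) := by positivity
    have hlt : luxNorm n (fun u => ENNReal.ofReal (Ψ u)) μ r f
        < luxNorm n (fun u => ENNReal.ofReal (Ψ u)) μ r f + ENNReal.ofReal ((ε:ℝ) / (2 * M)) :=
      ENNReal.lt_add_right hLlt.ne (by simp [ENNReal.ofReal_eq_zero, not_le, hδ])
    rw [luxNorm] at hlt
    obtain ⟨x, hxS, hxlt⟩ := sInf_lt_iff.mp hlt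
    obtain ⟨e, he, rfl, hinte⟩ := hxS
    have h1 : luxNorm n (fun u => ENNReal.ofReal (Φ u)) lam r f
        ≤ ENNReal.ofReal (2 * M * e) := by
      apply sInf_le
      refine ⟨2 * M * e, by positivity, rfl, ?_⟩
      simp only [← hBdef, ← hvdef]
      apply key e he
      simpa only [← hBdef, ← hvdef] using hinte
    refine le_trans h1 ?_
    rw [ENNReal.ofReal_mul (show (0:ℝ) ≤ 2 * M by positivity)]
    calc ENNReal.ofReal (2 * M) * ENNReal.ofReal e
        ≤ ENNReal.ofReal (2 * M) *
          (luxNorm n (fun u => ENNReal.ofReal (Ψ u)) μ r f + ENNReal.ofReal ((ε:ℝ) / (2 * M))) := by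
          apply mul_le_mul_right
          rw [luxNorm]
          exact hxlt.le
      _ = ENNReal.ofReal (2 * M) * luxNorm n (fun u => ENNReal.ofReal (Ψ u)) μ r f
          + ENNReal.ofReal (2 * M) * ENNReal.ofReal ((ε:ℝ) / (2 * M)) := mul_add _ _ _
      _ = ENNReal.ofReal (2 * M) * luxNorm n (fun u => ENNReal.ofReal (Ψ u)) μ r f + ε := by
          rw [← ENNReal.ofReal_mul (by positivity)]
          rw [show 2 * M * ((ε:ℝ) / (2 * M)) = (ε:ℝ) by field_simp]
          rw [ENNReal.ofReal_coe_nnreal]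
  refine le_trans hlux ?_
  apply mul_le_mul_right
  exact le_iSup (fun ρ : {ρ : ℝ // 0 < ρ} => luxNorm n (fun u => ENNReal.ofReal (Ψ u)) μ ρ.1 f)
    ⟨r, hr⟩
end
end

section
/- Let Φ and Ψ be Orlicz functions and 0 ≤ λ, μ < 1. If there exists C > 0 such that ‖f‖_{M^{Φ,λ}(0)} ≤ C ‖f‖_{M^{Ψ,μ}(0)} for every f ∈ M^{Ψ,μ}(0), then Φ(u)^{(μ−1)/(λ−1)} ≤ Ψ(Cu) for all u > 0; equivalently, Φ(u/C) ≤ Ψ(u)^{(λ−1)/(μ−1)} for all u > 0. -/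
open MeasureTheory ENNReal

noncomputable section

/-- if M^{Ψ,μ}(0) embeds into M^{Φ,λ}(0) with constant C, then
Φ(u)^{(μ-1)/(λ-1)} ≤ Ψ(Cu) for all u > 0; equivalently Φ(u/C) ≤ Ψ(u)^{(λ-1)/(μ-1)}. -/
theorem statement17 (n : ℕ) (hn : 0 < n) (Φ Ψ : ℝ → ℝ)
    (hΦ : IsOrliczFunction Φ) (hΨ : IsOrliczFunction Ψ)
    (lam μ : ℝ) (hlam0 : 0 ≤ lam) (hlam1 : lam < 1) (hμ0 : 0 ≤ μ) (hμ1 : μ < 1)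
    (C : ℝ) (hC : 0 < C)
    (hemb : ∀ f : EuclideanSpace ℝ (Fin n) → ℝ, MemCentralMorreyOrlicz n Ψ μ f →
      centralNorm n (fun u => ENNReal.ofReal (Φ u)) lam f
        ≤ ENNReal.ofReal C * centralNorm n (fun u => ENNReal.ofReal (Ψ u)) μ f) :
    ∀ u : ℝ, 0 < u →
      Φ u ^ ((μ - 1) / (lam - 1)) ≤ Ψ (C * u)
        ∧ Φ (u / C) ≤ Ψ u ^ ((lam - 1) / (μ - 1)) := by
  haveI hNT : Nontrivial (EuclideanSpace ℝ (Fin n)) := by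
    have : 0 < Module.finrank ℝ (EuclideanSpace ℝ (Fin n)) := by simpa using hn
    exact Module.nontrivial_of_finrank_pos this
  have hlam1' : lam - 1 < 0 := by linarith
  have hμ1' : μ - 1 < 0 := by linarith
  have hΦnonneg : ∀ x : ℝ, 0 ≤ x → 0 ≤ Φ x := fun x hx => by
    rw [← hΦ.zero]
    exact hΦ.strictMono.monotoneOn Set.self_mem_Ici hx hx
  have hΨnonneg : ∀ x : ℝ, 0 ≤ x → 0 ≤ Ψ x := fun x hx => by
    rw [← hΨ.zero]
    exact hΨ.strictMono.monotoneOn Set.self_mem_Ici hx hx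
  have hsplit : ∀ (y x : ℝ), 0 < x → x ^ (y - 1) * x = x ^ y := by
    intro y x hx
    have h1 : (y - 1) + 1 = y := by ring
    rw [← Real.rpow_add_one hx.ne', h1]
  set c : ℝ := (volume (Metric.ball (0 : EuclideanSpace ℝ (Fin n)) 1)).toReal with hc_def
  have hc : 0 < c :=
    ENNReal.toReal_pos (Metric.measure_ball_pos _ _ one_pos).ne' measure_ball_lt_top.ne
  have hvol : ∀ s : ℝ, 0 ≤ s →
      volume (Metric.ball (0 : EuclideanSpace ℝ (Fin n)) s) = ENNReal.ofReal (s ^ n * c) := by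
    intro s hs
    rw [Measure.addHaar_ball volume _ hs, finrank_euclideanSpace_fin,
      ENNReal.ofReal_mul (by positivity), hc_def,
      ENNReal.ofReal_toReal measure_ball_lt_top.ne]
  have key : ∀ u : ℝ, 0 < u → Φ u ^ ((μ - 1) / (lam - 1)) ≤ Ψ (C * u) := by
    intro u hu
    have hΦu : 0 < Φ u := by
      have := hΦ.strictMono Set.self_mem_Ici (Set.mem_Ici.mpr hu.le) hu
      rwa [hΦ.zero] at this
    set t : ℝ := Φ u ^ (1 / (lam - 1)) with ht_def
    have ht : 0 < t := Real.rpow_pos_of_pos hΦu _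
    have htlam : t ^ (lam - 1) = Φ u := by
      rw [ht_def, ← Real.rpow_mul hΦu.le, one_div, inv_mul_cancel₀ hlam1'.ne, Real.rpow_one]
    have hgoal_eq : t ^ (μ - 1) = Φ u ^ ((μ - 1) / (lam - 1)) := by
      rw [ht_def, ← Real.rpow_mul hΦu.le]
      congr 1
      ring
    set ρ : ℝ := (t / c) ^ (1 / (n : ℝ)) with hρ_def
    have htc : 0 < t / c := div_pos ht hc
    have hρ : 0 < ρ := Real.rpow_pos_of_pos htc _
    have hρn : ρ ^ n * c = t := by
      have hn' : (n : ℝ) ≠ 0 := Nat.cast_ne_zero.mpr hn.ne'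
      have h1 : ρ ^ (n : ℝ) = t / c := by
        rw [hρ_def, ← Real.rpow_mul htc.le, one_div, inv_mul_cancel₀ hn', Real.rpow_one]
      rw [← Real.rpow_natCast ρ n, h1, div_mul_cancel₀ _ hc.ne']
    by_contra hcon
    push_neg at hcon
    rw [← hgoal_eq] at hcon
    have hCu : 0 < C * u := mul_pos hC hu
    have hsub : Set.Ioi (C * u) ⊆ Set.Ici (0 : ℝ) := fun x hx =>
      le_of_lt (lt_trans hCu hx)
    have hcont : ContinuousWithinAt Ψ (Set.Ioi (C * u)) (C * u) :=
      (hΨ.continuous (C * u) (Set.mem_Ici.mpr hCu.le)).mono hsub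
    have hev : ∀ᶠ x in nhdsWithin (C * u) (Set.Ioi (C * u)), Ψ x < t ^ (μ - 1) :=
      hcont.eventually_lt_const hcon
    obtain ⟨a, haΨ, haCu⟩ := (hev.and self_mem_nhdsWithin).exists
    have haCu' : C * u < a := haCu
    have ha0 : 0 < a := lt_trans hCu haCu'
    set f : EuclideanSpace ℝ (Fin n) → ℝ :=
      (Metric.ball (0 : EuclideanSpace ℝ (Fin n)) ρ).indicator (fun _ => a) with hf_def
    have hinter : ∀ r : ℝ, Metric.ball (0 : EuclideanSpace ℝ (Fin n)) ρ ∩ Metric.ball 0 r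
        = Metric.ball 0 (min ρ r) := by
      intro r; ext x; simp [lt_min_iff]
    have hint : ∀ (g : ℝ → ℝ), g 0 = 0 → ∀ e : ℝ, 0 < e → ∀ r : ℝ,
        (∫⁻ x in Metric.ball (0 : EuclideanSpace ℝ (Fin n)) r, ENNReal.ofReal (g (|f x| / e)))
          = ENNReal.ofReal (g (a / e)) *
            volume (Metric.ball (0 : EuclideanSpace ℝ (Fin n)) (min ρ r)) := by
      intro g hg0 e he r
      have hfin : (fun x => ENNReal.ofReal (g (|f x| / e)))
          = (Metric.ball (0 : EuclideanSpace ℝ (Fin n)) ρ).indicator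
              (fun _ => ENNReal.ofReal (g (a / e))) := by
        funext x
        by_cases hx : x ∈ Metric.ball (0 : EuclideanSpace ℝ (Fin n)) ρ
        · simp [hf_def, Set.indicator_of_mem hx, abs_of_pos ha0]
        · simp [hf_def, Set.indicator_of_notMem hx, hg0]
      rw [hfin, lintegral_indicator_const measurableSet_ball,
        Measure.restrict_apply measurableSet_ball, hinter r]
    have hfint : Integrable f volume := by
      rw [hf_def, integrable_indicator_iff measurableSet_ball]
      exact integrableOn_const measure_ball_lt_top.ne
    have hΨnorm : centralNorm n (fun v => ENNReal.ofReal (Ψ v)) μ f ≤ ENNReal.ofReal 1 := by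
      refine iSup_le fun r => sInf_le ⟨1, one_pos, rfl, ?_⟩
      rw [hint Ψ hΨ.zero 1 one_pos r.1,
        hvol (min ρ r.1) (le_min hρ.le r.2.le),
        hvol r.1 r.2.le,
        ENNReal.toReal_ofReal (mul_nonneg (pow_nonneg r.2.le n) hc.le),
        div_one, ← ENNReal.ofReal_mul (hΨnonneg a ha0.le)]
      refine ENNReal.ofReal_le_ofReal ?_
      set v : ℝ := r.1 ^ n * c with hv_def
      have hv0 : 0 < v := mul_pos (pow_pos r.2 n) hc
      have hminv : min ρ r.1 ^ n * c = min t v := by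
        rcases le_total ρ r.1 with h | h
        · rw [min_eq_left h, hρn, min_eq_left]
          rw [hv_def, ← hρn]
          exact mul_le_mul_of_nonneg_right (pow_le_pow_left₀ hρ.le h n) hc.le
        · rw [min_eq_right h, min_eq_right]
          rw [hv_def, ← hρn]
          exact mul_le_mul_of_nonneg_right (pow_le_pow_left₀ r.2.le h n) hc.le
      rw [hminv]
      have hΨaK : Ψ a ≤ t ^ (μ - 1) := haΨ.le
      rcases le_total t v with h | h
      · rw [min_eq_left h]
        calc Ψ a * t ≤ t ^ (μ - 1) * t := mul_le_mul_of_nonneg_right hΨaK ht.le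
          _ = t ^ μ := hsplit μ t ht
          _ ≤ v ^ μ := Real.rpow_le_rpow ht.le h hμ0
      · rw [min_eq_right h]
        calc Ψ a * v ≤ t ^ (μ - 1) * v := mul_le_mul_of_nonneg_right hΨaK hv0.le
          _ ≤ v ^ (μ - 1) * v :=
            mul_le_mul_of_nonneg_right (Real.rpow_le_rpow_of_nonpos hv0 h hμ1'.le) hv0.le
          _ = v ^ μ := hsplit μ v hv0
    have hmem : MemCentralMorreyOrlicz n Ψ μ f :=
      ⟨hfint.locallyIntegrable, lt_of_le_of_lt hΨnorm ENNReal.ofReal_lt_top⟩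
    have hΦnorm : ENNReal.ofReal (a / u)
        ≤ centralNorm n (fun v => ENNReal.ofReal (Φ v)) lam f := by
      refine le_trans ?_ (le_iSup _ (⟨ρ, hρ⟩ : {r : ℝ // 0 < r}))
      refine le_sInf fun ε hε => ?_
      obtain ⟨e, he, rfl, hle⟩ := hε
      rw [hint Φ hΦ.zero e he ρ, min_self, hvol ρ hρ.le, hρn,
        ENNReal.toReal_ofReal ht.le,
        ← ENNReal.ofReal_mul (hΦnonneg _ (by positivity))] at hle
      have hreal : Φ (a / e) * t ≤ t ^ lam :=
        (ENNReal.ofReal_le_ofReal_iff (Real.rpow_nonneg ht.le _)).mp hle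
      rw [← hsplit lam t ht, htlam] at hreal
      have hΦle : Φ (a / e) ≤ Φ u := le_of_mul_le_mul_right hreal ht
      have haeu : a / e ≤ u := by
        by_contra hgt
        push_neg at hgt
        exact absurd (hΦ.strictMono (Set.mem_Ici.mpr hu.le)
          (Set.mem_Ici.mpr (by positivity)) hgt) (not_lt.mpr hΦle)
      refine ENNReal.ofReal_le_ofReal ?_
      rw [div_le_iff₀ hu]
      calc a ≤ u * e := (div_le_iff₀ he).mp haeu
        _ = e * u := mul_comm _ _
    have hchain : ENNReal.ofReal (a / u) ≤ ENNReal.ofReal C := by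
      refine le_trans hΦnorm (le_trans (hemb f hmem) ?_)
      calc ENNReal.ofReal C * centralNorm n (fun v => ENNReal.ofReal (Ψ v)) μ f
          ≤ ENNReal.ofReal C * ENNReal.ofReal 1 := mul_le_mul_right hΨnorm _
        _ = ENNReal.ofReal C := by rw [ENNReal.ofReal_one, mul_one]
    have hfin2 : a / u ≤ C := (ENNReal.ofReal_le_ofReal_iff hC.le).mp hchain
    have : a ≤ C * u := (div_le_iff₀ hu).mp hfin2
    exact absurd this (not_le.mpr haCu')
  intro u hu
  refine ⟨key u hu, ?_⟩
  have h1 := key (u / C) (div_pos hu hC)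
  rw [show C * (u / C) = u by field_simp] at h1
  have hΦnn : 0 ≤ Φ (u / C) := hΦnonneg _ (div_pos hu hC).le
  have hp : 0 ≤ (lam - 1) / (μ - 1) :=
    le_of_lt (div_pos_of_neg_of_neg hlam1' hμ1')
  have h2 := Real.rpow_le_rpow (Real.rpow_nonneg hΦnn _) h1 hp
  rwa [← Real.rpow_mul hΦnn,
    show (μ - 1) / (lam - 1) * ((lam - 1) / (μ - 1)) = 1 by
      rw [div_mul_div_comm, mul_comm (μ - 1),
        div_self (mul_ne_zero hlam1'.ne hμ1'.ne)], Real.rpow_one] at h2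
end
end

section
/- Let 0 < α < n, 0 < λ < 1, 1 < p_1 < p_2 < n(1−λ)/α, 1 < q_1 < q_2 < ∞, 0 < μ < 1, and define Φ(u) = max(u^{p_1}, u^{p_2}) and Ψ(u) = max(u^{q_1}, u^{q_2}). If 1/p_1 − α/n = 1/q_1, λ/p_1 < μ/q_1, 1/p_2 − α/n = 1/q_2 and λ/p_2 = μ/q_2, then there exist constants C_1, C_2 ≥ 1 such that ∫_u^∞ t^{α/n} Φ^{-1}(t^{λ−1}) dt/t ≤ C_1 Ψ^{-1}(u^{μ−1}) for all u > 0, and u^{α/n} Φ^{-1}(r^λ/u) + ∫_u^r t^{α/n} Φ^{-1}(r^λ/t) dt/t ≤ C_2 Ψ^{-1}(r^μ/u) for all r > u > 0. -/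
open MeasureTheory ENNReal

noncomputable section

lemma aux_rpow1 (t b c d : ℝ) (ht : 0 < t) :
    t ^ b * (t ^ c) ^ d / t = t ^ (b + c * d - 1) := by
  rw [← Real.rpow_mul ht.le, ← Real.rpow_add ht, Real.rpow_sub ht, Real.rpow_one]

lemma aux_rpow3 (t K b e : ℝ) (ht : 0 < t) (hK : 0 ≤ K) :
    t ^ b * (K / t) ^ e = K ^ e * t ^ (b - e) := by
  rw [Real.div_rpow hK ht.le, Real.rpow_sub ht]; ring

lemma aux_rpow2 (t K b e : ℝ) (ht : 0 < t) (hK : 0 ≤ K) :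
    t ^ b * (K / t) ^ e / t = K ^ e * t ^ (b - e - 1) := by
  rw [div_eq_mul_inv (t ^ b * (K / t) ^ e) t, aux_rpow3 t K b e ht hK, mul_assoc,
    ← Real.rpow_neg_one t, ← Real.rpow_add ht, show b - e + -1 = b - e - 1 by ring]

lemma lintegral_rpow_Ioi {u a : ℝ} (hu : 0 < u) (ha : a < 0) :
    ∫⁻ t in Set.Ioi u, ENNReal.ofReal (t ^ (a - 1)) = ENNReal.ofReal (u ^ a / (-a)) := by
  rw [← ofReal_integral_eq_lintegral_ofReal
      (integrableOn_Ioi_rpow_of_lt (by linarith) hu) ?_]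
  · congr 1
    rw [integral_Ioi_rpow_of_lt (by linarith) hu]
    have : a - 1 + 1 = a := by ring
    rw [this, neg_div, div_neg]
  · filter_upwards [ae_restrict_mem measurableSet_Ioi] with x hx
    exact Real.rpow_nonneg (hu.trans hx).le _

lemma lintegral_le_of_le_rpow {u a K : ℝ} (hu : 0 < u) (ha : a < 0) (hK : 0 ≤ K)
    {f : ℝ → ℝ≥0∞} {s : Set ℝ} (hs : s ⊆ Set.Ioi u)
    (hf : ∀ t ∈ s, f t ≤ ENNReal.ofReal (K * t ^ (a - 1))) :
    ∫⁻ t in s, f t ≤ ENNReal.ofReal (K * (u ^ a / (-a))) := by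
  calc ∫⁻ t in s, f t ≤ ∫⁻ t in s, ENNReal.ofReal (K * t ^ (a - 1)) := by
        apply setLIntegral_mono _ hf
        fun_prop
    _ ≤ ∫⁻ t in Set.Ioi u, ENNReal.ofReal (K * t ^ (a - 1)) := lintegral_mono_set hs
    _ = ENNReal.ofReal K * ∫⁻ t in Set.Ioi u, ENNReal.ofReal (t ^ (a - 1)) := by
        simp_rw [ENNReal.ofReal_mul hK]
        rw [lintegral_const_mul' _ _ ENNReal.ofReal_ne_top]
    _ = ENNReal.ofReal (K * (u ^ a / (-a))) := by
        rw [lintegral_rpow_Ioi hu ha, ← ENNReal.ofReal_mul hK]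

/-- for Φ(u) = max(u^{p₁}, u^{p₂}) and Ψ(u) = max(u^{q₁}, u^{q₂})
(whose inverses are Φ⁻¹(v) = min(v^{1/p₁}, v^{1/p₂}), Ψ⁻¹(v) = min(v^{1/q₁}, v^{1/q₂})),
under the stated relations between the exponents, conditions (14) and (15-2) hold. -/
theorem statement18 (n : ℕ) (α : ℝ) (hα0 : 0 < α) (hαn : α < n)
    (lam μ : ℝ) (hlam0 : 0 < lam) (hlam1 : lam < 1) (hμ0 : 0 < μ) (hμ1 : μ < 1)
    (p₁ p₂ q₁ q₂ : ℝ) (hp₁ : 1 < p₁) (hp₁₂ : p₁ < p₂) (hp₂ : p₂ < n * (1 - lam) / α)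
    (hq₁ : 1 < q₁) (hq₁₂ : q₁ < q₂)
    (h₁ : 1 / p₁ - α / n = 1 / q₁) (h₂ : lam / p₁ < μ / q₁)
    (h₃ : 1 / p₂ - α / n = 1 / q₂) (h₄ : lam / p₂ = μ / q₂) :
    ∃ C₁ C₂ : ℝ, 1 ≤ C₁ ∧ 1 ≤ C₂ ∧
      (∀ u : ℝ, 0 < u →
        (∫⁻ t in Set.Ioi u, ENNReal.ofReal
            (t ^ (α / n) * min ((t ^ (lam - 1)) ^ (1 / p₁)) ((t ^ (lam - 1)) ^ (1 / p₂)) / t))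
          ≤ ENNReal.ofReal (C₁ * min ((u ^ (μ - 1)) ^ (1 / q₁)) ((u ^ (μ - 1)) ^ (1 / q₂)))) ∧
      (∀ u r : ℝ, 0 < u → u < r →
        ENNReal.ofReal
            (u ^ (α / n) * min ((r ^ lam / u) ^ (1 / p₁)) ((r ^ lam / u) ^ (1 / p₂)))
            + (∫⁻ t in Set.Ioo u r, ENNReal.ofReal
                (t ^ (α / n) * min ((r ^ lam / t) ^ (1 / p₁)) ((r ^ lam / t) ^ (1 / p₂)) / t))
          ≤ ENNReal.ofReal (C₂ * min ((r ^ μ / u) ^ (1 / q₁)) ((r ^ μ / u) ^ (1 / q₂)))) := by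
  have hn0 : (0:ℝ) < n := hα0.trans hαn
  have hp₁0 : (0:ℝ) < p₁ := by linarith
  have hp₂0 : (0:ℝ) < p₂ := by linarith
  have hq₁0 : (0:ℝ) < q₁ := by linarith
  have hq₂0 : (0:ℝ) < q₂ := by linarith
  have hq12 : 1/q₂ ≤ 1/q₁ := one_div_le_one_div_of_le hq₁0 hq₁₂.le
  have hαn₁ : α / n = 1/p₁ - 1/q₁ := by linarith
  have hαn₂ : α / n = 1/p₂ - 1/q₂ := by linarith
  have h₄' : lam * q₂ = μ * p₂ := (div_eq_div_iff hp₂0.ne' hq₂0.ne').mp h₄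
  set a₁ : ℝ := lam/p₁ - 1/q₁ with ha₁def
  set a₂ : ℝ := (μ-1)/q₂ with ha₂def
  have hsub : (μ-1)/q₁ = μ/q₁ - 1/q₁ := sub_div μ 1 q₁
  have hd1 : (μ-1)/q₁ < 0 := div_neg_of_neg_of_pos (by linarith) hq₁0
  have ha₁lt : a₁ < (μ-1)/q₁ := by rw [hsub, ha₁def]; linarith
  have ha₁ : a₁ < 0 := ha₁lt.trans hd1
  have ha₂ : a₂ < 0 := div_neg_of_neg_of_pos (by linarith) hq₂0
  have hna₁ : 0 < -a₁ := neg_pos.mpr ha₁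
  have hna₂ : 0 < -a₂ := neg_pos.mpr ha₂
  have hC1a : 1/(-a₁) ≤ max 1 (1/(-a₁) + 1/(-a₂)) :=
    le_trans (by have := one_div_pos.mpr hna₂; linarith) (le_max_right _ _)
  have hC1b : 1/(-a₂) ≤ max 1 (1/(-a₁) + 1/(-a₂)) :=
    le_trans (by have := one_div_pos.mpr hna₁; linarith) (le_max_right _ _)
  refine ⟨max 1 (1/(-a₁) + 1/(-a₂)), 1 + q₂, le_max_left _ _, by linarith, ?_, ?_⟩
  · -- condition (14)
    intro u hu
    have hexp : ∀ (p q : ℝ), 0 < p → 0 < q → α / n = 1/p - 1/q →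
        ∀ t : ℝ, 0 < t → t ^ (α/n) * (t ^ (lam-1)) ^ (1/p) / t
          = t ^ ((lam/p - 1/q) - 1) := by
      intro p q hp hq hpq t ht
      rw [aux_rpow1 t _ _ _ ht]
      congr 1
      rw [hpq]
      field_simp
      ring
    rcases le_or_gt 1 u with h1u | hu1
    · -- case u ≥ 1 : use branch p₁
      have hv0 : (0:ℝ) < u ^ (μ-1) := Real.rpow_pos_of_pos hu _
      have hv1 : u ^ (μ-1) ≤ 1 :=
        Real.rpow_le_one_of_one_le_of_nonpos h1u (by linarith)
      rw [min_eq_left (Real.rpow_le_rpow_of_exponent_ge hv0 hv1 hq12)]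
      have key : ∀ t ∈ Set.Ioi u, ENNReal.ofReal
          (t ^ (α/n) * min ((t ^ (lam-1)) ^ (1/p₁)) ((t ^ (lam-1)) ^ (1/p₂)) / t)
          ≤ ENNReal.ofReal (1 * t ^ (a₁ - 1)) := by
        intro t ht
        have ht0 : 0 < t := hu.trans ht
        apply ENNReal.ofReal_le_ofReal
        rw [one_mul]
        calc t ^ (α/n) * min ((t ^ (lam-1)) ^ (1/p₁)) ((t ^ (lam-1)) ^ (1/p₂)) / t
            ≤ t ^ (α/n) * (t ^ (lam-1)) ^ (1/p₁) / t := by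
              gcongr
              exact min_le_left _ _
          _ = t ^ (a₁ - 1) := hexp p₁ q₁ hp₁0 hq₁0 hαn₁ t ht0
      refine le_trans (lintegral_le_of_le_rpow hu ha₁ zero_le_one subset_rfl key)
        (ENNReal.ofReal_le_ofReal ?_)
      rw [one_mul]
      have h1' : (u ^ (μ-1)) ^ (1/q₁) = u ^ ((μ-1)/q₁) := by
        rw [← Real.rpow_mul hu.le, mul_one_div]
      have h2' : u ^ a₁ ≤ u ^ ((μ-1)/q₁) :=
        Real.rpow_le_rpow_of_exponent_le h1u ha₁lt.le
      calc u ^ a₁ / (-a₁) = u ^ a₁ * (1/(-a₁)) := by rw [div_eq_mul_one_div]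
        _ ≤ u ^ ((μ-1)/q₁) * max 1 (1/(-a₁) + 1/(-a₂)) :=
            mul_le_mul h2' hC1a (one_div_pos.mpr hna₁).le (Real.rpow_nonneg hu.le _)
        _ = max 1 (1/(-a₁) + 1/(-a₂)) * (u ^ (μ-1)) ^ (1/q₁) := by rw [h1']; ring
    · -- case u < 1 : use branch p₂
      have hv1 : 1 ≤ u ^ (μ-1) :=
        Real.one_le_rpow_of_pos_of_le_one_of_nonpos hu hu1.le (by linarith)
      rw [min_eq_right (Real.rpow_le_rpow_of_exponent_le hv1 hq12)]
      have hexp₂ : lam/p₂ - 1/q₂ = a₂ := by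
        rw [ha₂def]
        field_simp
        linear_combination h₄'
      have key : ∀ t ∈ Set.Ioi u, ENNReal.ofReal
          (t ^ (α/n) * min ((t ^ (lam-1)) ^ (1/p₁)) ((t ^ (lam-1)) ^ (1/p₂)) / t)
          ≤ ENNReal.ofReal (1 * t ^ (a₂ - 1)) := by
        intro t ht
        have ht0 : 0 < t := hu.trans ht
        apply ENNReal.ofReal_le_ofReal
        rw [one_mul]
        calc t ^ (α/n) * min ((t ^ (lam-1)) ^ (1/p₁)) ((t ^ (lam-1)) ^ (1/p₂)) / t
            ≤ t ^ (α/n) * (t ^ (lam-1)) ^ (1/p₂) / t := by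
              gcongr
              exact min_le_right _ _
          _ = t ^ ((lam/p₂ - 1/q₂) - 1) := hexp p₂ q₂ hp₂0 hq₂0 hαn₂ t ht0
          _ = t ^ (a₂ - 1) := by rw [hexp₂]
      refine le_trans (lintegral_le_of_le_rpow hu ha₂ zero_le_one subset_rfl key)
        (ENNReal.ofReal_le_ofReal ?_)
      rw [one_mul]
      have h1' : (u ^ (μ-1)) ^ (1/q₂) = u ^ a₂ := by
        rw [← Real.rpow_mul hu.le, mul_one_div, ha₂def]
      calc u ^ a₂ / (-a₂) = u ^ a₂ * (1/(-a₂)) := by rw [div_eq_mul_one_div]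
        _ ≤ u ^ a₂ * max 1 (1/(-a₁) + 1/(-a₂)) := by
            apply mul_le_mul_of_nonneg_left hC1b (Real.rpow_nonneg hu.le _)
        _ = max 1 (1/(-a₁) + 1/(-a₂)) * (u ^ (μ-1)) ^ (1/q₂) := by rw [h1']; ring
  · -- condition (15)
    intro u r hu hur
    have hr0 : 0 < r := hu.trans hur
    have hrl : (0:ℝ) ≤ r ^ lam := (Real.rpow_pos_of_pos hr0 _).le
    have hw0 : (0:ℝ) < r ^ μ / u := div_pos (Real.rpow_pos_of_pos hr0 _) hu
    have main : ∀ p q : ℝ, 0 < p → 0 < q → α / n = 1/p - 1/q →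
        (∀ t : ℝ, min ((r ^ lam / t) ^ (1/p₁)) ((r ^ lam / t) ^ (1/p₂))
          ≤ (r ^ lam / t) ^ (1/p)) →
        ENNReal.ofReal
            (u ^ (α/n) * min ((r ^ lam / u) ^ (1/p₁)) ((r ^ lam / u) ^ (1/p₂)))
            + (∫⁻ t in Set.Ioo u r, ENNReal.ofReal
                (t ^ (α/n) * min ((r ^ lam / t) ^ (1/p₁)) ((r ^ lam / t) ^ (1/p₂)) / t))
          ≤ ENNReal.ofReal ((1 + q) * ((r ^ lam) ^ (1/p) * u ^ (-(1/q)))) := by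
      intro p q hp hq hpq hminb
      have hq' : -(1/q) < 0 := neg_lt_zero.mpr (one_div_pos.mpr hq)
      have hKnn : (0:ℝ) ≤ (r ^ lam) ^ (1/p) := Real.rpow_nonneg hrl _
      have hb : u ^ (α/n) * min ((r ^ lam / u) ^ (1/p₁)) ((r ^ lam / u) ^ (1/p₂))
          ≤ (r ^ lam) ^ (1/p) * u ^ (-(1/q)) := by
        calc u ^ (α/n) * min ((r ^ lam / u) ^ (1/p₁)) ((r ^ lam / u) ^ (1/p₂))
            ≤ u ^ (α/n) * (r ^ lam / u) ^ (1/p) :=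
              mul_le_mul_of_nonneg_left (hminb u) (Real.rpow_nonneg hu.le _)
          _ = (r ^ lam) ^ (1/p) * u ^ (α/n - 1/p) := aux_rpow3 u _ _ _ hu hrl
          _ = (r ^ lam) ^ (1/p) * u ^ (-(1/q)) := by
              congr 2
              rw [hpq]; ring
      have key : ∀ t ∈ Set.Ioo u r, ENNReal.ofReal
          (t ^ (α/n) * min ((r ^ lam / t) ^ (1/p₁)) ((r ^ lam / t) ^ (1/p₂)) / t)
          ≤ ENNReal.ofReal ((r ^ lam) ^ (1/p) * t ^ (-(1/q) - 1)) := by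
        intro t ht
        have ht0 : 0 < t := hu.trans ht.1
        apply ENNReal.ofReal_le_ofReal
        calc t ^ (α/n) * min ((r ^ lam / t) ^ (1/p₁)) ((r ^ lam / t) ^ (1/p₂)) / t
            ≤ t ^ (α/n) * (r ^ lam / t) ^ (1/p) / t := by
              gcongr
              exact hminb t
          _ = (r ^ lam) ^ (1/p) * t ^ (α/n - 1/p - 1) := aux_rpow2 t _ _ _ ht0 hrl
          _ = (r ^ lam) ^ (1/p) * t ^ (-(1/q) - 1) := by
              congr 2
              rw [hpq]; ring
      have hi := lintegral_le_of_le_rpow hu hq' hKnn Set.Ioo_subset_Ioi_self key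
      calc ENNReal.ofReal
            (u ^ (α/n) * min ((r ^ lam / u) ^ (1/p₁)) ((r ^ lam / u) ^ (1/p₂)))
            + (∫⁻ t in Set.Ioo u r, ENNReal.ofReal
                (t ^ (α/n) * min ((r ^ lam / t) ^ (1/p₁)) ((r ^ lam / t) ^ (1/p₂)) / t))
          ≤ ENNReal.ofReal ((r ^ lam) ^ (1/p) * u ^ (-(1/q)))
            + ENNReal.ofReal ((r ^ lam) ^ (1/p) * (u ^ (-(1/q)) / (-(-(1/q))))) :=
            add_le_add (ENNReal.ofReal_le_ofReal hb) hi
        _ = ENNReal.ofReal ((r ^ lam) ^ (1/p) * u ^ (-(1/q))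
              + (r ^ lam) ^ (1/p) * (u ^ (-(1/q)) / (-(-(1/q))))) := by
            rw [ENNReal.ofReal_add (by positivity) ?_]
            have h0 : (0:ℝ) < -(-(1/q)) := by rw [neg_neg]; positivity
            positivity
        _ ≤ ENNReal.ofReal ((1 + q) * ((r ^ lam) ^ (1/p) * u ^ (-(1/q)))) := by
            apply ENNReal.ofReal_le_ofReal
            rw [neg_neg, div_div_eq_mul_div, div_one]
            ring_nf
            exact le_rfl
    rcases le_or_gt u (r ^ μ) with hA | hB
    · -- r^μ ≥ u : branch p₂
      have hw1 : 1 ≤ r ^ μ / u := (one_le_div hu).mpr hA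
      rw [min_eq_right (Real.rpow_le_rpow_of_exponent_le hw1 hq12)]
      refine le_trans (main p₂ q₂ hp₂0 hq₂0 hαn₂ fun t => min_le_right _ _)
        (ENNReal.ofReal_le_ofReal ?_)
      have hKK : (r ^ lam) ^ (1/p₂) = (r ^ μ) ^ (1/q₂) := by
        rw [← Real.rpow_mul hr0.le, ← Real.rpow_mul hr0.le, mul_one_div, mul_one_div, h₄]
      have hsplit : (r ^ μ / u) ^ (1/q₂) = (r ^ μ) ^ (1/q₂) * u ^ (-(1/q₂)) := by
        rw [Real.div_rpow (Real.rpow_nonneg hr0.le _) hu.le, Real.rpow_neg hu.le,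
          div_eq_mul_inv]
      rw [hKK, hsplit]
    · -- r^μ < u : branch p₁, and necessarily r ≥ 1
      have hr1 : 1 ≤ r := by
        by_contra h
        push_neg at h
        have : r < r ^ μ := by
          calc r = r ^ (1:ℝ) := (Real.rpow_one r).symm
            _ < r ^ μ := Real.rpow_lt_rpow_of_exponent_gt hr0 h hμ1
        linarith
      have hw1 : r ^ μ / u ≤ 1 := ((div_lt_one hu).mpr hB).le
      rw [min_eq_left (Real.rpow_le_rpow_of_exponent_ge hw0 hw1 hq12)]
      refine le_trans (main p₁ q₁ hp₁0 hq₁0 hαn₁ fun t => min_le_left _ _)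
        (ENNReal.ofReal_le_ofReal ?_)
      have hsplit : (r ^ μ / u) ^ (1/q₁) = (r ^ μ) ^ (1/q₁) * u ^ (-(1/q₁)) := by
        rw [Real.div_rpow (Real.rpow_nonneg hr0.le _) hu.le, Real.rpow_neg hu.le,
          div_eq_mul_inv]
      rw [hsplit]
      have hKle : (r ^ lam) ^ (1/p₁) ≤ (r ^ μ) ^ (1/q₁) := by
        rw [← Real.rpow_mul hr0.le, ← Real.rpow_mul hr0.le, mul_one_div, mul_one_div]
        exact Real.rpow_le_rpow_of_exponent_le hr1 h₂.le
      have hu' : (0:ℝ) ≤ u ^ (-(1/q₁)) := Real.rpow_nonneg hu.le _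
      calc (1 + q₁) * ((r ^ lam) ^ (1/p₁) * u ^ (-(1/q₁)))
          ≤ (1 + q₂) * ((r ^ μ) ^ (1/q₁) * u ^ (-(1/q₁))) := by
            apply mul_le_mul (by linarith)
              (mul_le_mul_of_nonneg_right hKle hu') (by positivity)
              (by linarith)
        _ = (1 + q₂) * ((r ^ μ) ^ (1/q₁) * u ^ (-(1/q₁))) := rfl
end
end
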